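/- arXiv:1712.05770 — 11 statements merged into one kernel-verified Lean document; each statement's English description precedes it below -/
import Mathlib

section
/- Suppose the bounded operator X : H_A → H_D is a solution of the Riccati equation XA − DX + XBX = C. Set Z_A := A + BX. Then for every z in the resolvent set of D the Schur complement factorizes as M_A(z) = W_A(z) ∘ (Z_A − z·I), where W_A(z) := I − B(D − z)^{-1}X. -/
/-- If `X` solves the Riccati equation `XA − DX + XBX = C` and `Z_A := A + BX`, then
for every `z` in the resolvent set of `D` the Schur complement
`M_A(z) = A − z − B(D − z)⁻¹C` factorizes as `M_A(z) = W_A(z)(Z_A − z)` with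
`W_A(z) = I − B(D − z)⁻¹X`. -/
theorem schur_complement_factorization_right {H_A H_D : Type*}
    [NormedAddCommGroup H_A] [InnerProductSpace ℂ H_A] [CompleteSpace H_A]
    [NormedAddCommGroup H_D] [InnerProductSpace ℂ H_D] [CompleteSpace H_D]
    (A : H_A →L[ℂ] H_A) (B : H_D →L[ℂ] H_A) (C : H_A →L[ℂ] H_D) (D : H_D →L[ℂ] H_D)
    (X : H_A →L[ℂ] H_D)
    (hX : X.comp A - D.comp X + (X.comp B).comp X = C)
    (z : ℂ) (hz : z ∈ resolventSet ℂ D) :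
    A - z • (1 : H_A →L[ℂ] H_A)
        - B.comp ((Ring.inverse (D - z • (1 : H_D →L[ℂ] H_D))).comp C) =
      ((1 : H_A →L[ℂ] H_A)
          - B.comp ((Ring.inverse (D - z • (1 : H_D →L[ℂ] H_D))).comp X)).comp
        (A + B.comp X - z • (1 : H_A →L[ℂ] H_A)) := by
  set R := Ring.inverse (D - z • (1 : H_D →L[ℂ] H_D)) with hRdef
  have hu : IsUnit (D - z • (1 : H_D →L[ℂ] H_D)) := by
    have h1 : IsUnit (algebraMap ℂ (H_D →L[ℂ] H_D) z - D) := hz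
    have h2 : algebraMap ℂ (H_D →L[ℂ] H_D) z = z • (1 : H_D →L[ℂ] H_D) := by
      simp [Algebra.algebraMap_eq_smul_one]
    rw [h2] at h1
    simpa [neg_sub] using h1.neg
  have hRD : R.comp (D - z • (1 : H_D →L[ℂ] H_D)) = 1 := by
    have := Ring.inverse_mul_cancel _ hu
    simpa [ContinuousLinearMap.mul_def, hRdef] using this
  have hXZ : X.comp (A + B.comp X - z • (1 : H_A →L[ℂ] H_A)) =
      C + (D - z • (1 : H_D →L[ℂ] H_D)).comp X := by
    rw [← hX]
    simp only [ContinuousLinearMap.comp_sub, ContinuousLinearMap.comp_add,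
      ContinuousLinearMap.sub_comp, ContinuousLinearMap.smul_comp,
      ContinuousLinearMap.comp_smul, ContinuousLinearMap.one_def, ContinuousLinearMap.comp_id,
      ContinuousLinearMap.id_comp, ContinuousLinearMap.comp_assoc]
    abel
  have key : R.comp (X.comp (A + B.comp X - z • (1 : H_A →L[ℂ] H_A))) = R.comp C + X := by
    rw [hXZ, ContinuousLinearMap.comp_add, ← ContinuousLinearMap.comp_assoc, hRD,
      ContinuousLinearMap.one_def, ContinuousLinearMap.id_comp]
  rw [ContinuousLinearMap.sub_comp, ContinuousLinearMap.one_def, ContinuousLinearMap.id_comp,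
    ContinuousLinearMap.comp_assoc, ContinuousLinearMap.comp_assoc,
    ← ContinuousLinearMap.one_def, key,
    ContinuousLinearMap.comp_add]
  abel
end

section
/- Suppose the bounded operator Y : H_D → H_A is a solution of the Riccati equation YD − AY + YCY = B. Set Z_D := D + CY. Then for every z in the resolvent set of A the Schur complement factorizes as M_D(z) = W_D(z) ∘ (Z_D − z·I), where W_D(z) := I − C(A − z)^{-1}Y. -/
set_option maxHeartbeats 1000000


/-- If `Y` solves the dual Riccati equation `YD − AY + YCY = B` and `Z_D := D + CY`, then
for every `z` in the resolvent set of `A` the Schur complement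
`M_D(z) = D − z − C(A − z)⁻¹B` factorizes as `M_D(z) = W_D(z)(Z_D − z)` with
`W_D(z) = I − C(A − z)⁻¹Y`. -/
theorem schur_complement_factorization_right_D {H_A H_D : Type*}
    [NormedAddCommGroup H_A] [InnerProductSpace ℂ H_A] [CompleteSpace H_A]
    [NormedAddCommGroup H_D] [InnerProductSpace ℂ H_D] [CompleteSpace H_D]
    (A : H_A →L[ℂ] H_A) (B : H_D →L[ℂ] H_A) (C : H_A →L[ℂ] H_D) (D : H_D →L[ℂ] H_D)
    (Y : H_D →L[ℂ] H_A)
    (hY : Y.comp D - A.comp Y + (Y.comp C).comp Y = B)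
    (z : ℂ) (hz : z ∈ resolventSet ℂ A) :
    D - z • (1 : H_D →L[ℂ] H_D)
        - C.comp ((Ring.inverse (A - z • (1 : H_A →L[ℂ] H_A))).comp B) =
      ((1 : H_D →L[ℂ] H_D)
          - C.comp ((Ring.inverse (A - z • (1 : H_A →L[ℂ] H_A))).comp Y)).comp
        (D + C.comp Y - z • (1 : H_D →L[ℂ] H_D)) := by
  have hu0 : IsUnit ((algebraMap ℂ (H_A →L[ℂ] H_A)) z - A) := hz
  have hu : IsUnit (A - z • (1 : H_A →L[ℂ] H_A)) := by
    simpa [Algebra.algebraMap_eq_smul_one, neg_sub] using hu0.neg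
  set R := Ring.inverse (A - z • (1 : H_A →L[ℂ] H_A)) with hRdef
  have hR : R * (A - z • (1 : H_A →L[ℂ] H_A)) = 1 := Ring.inverse_mul_cancel _ hu
  have hB : B = Y.comp (D + C.comp Y - z • (1 : H_D →L[ℂ] H_D))
      - (A - z • (1 : H_A →L[ℂ] H_A)).comp Y := by
    rw [← hY]; ext x
    simp [ContinuousLinearMap.comp_apply, ContinuousLinearMap.sub_apply,
      ContinuousLinearMap.add_apply, ContinuousLinearMap.smul_apply, map_sub, map_add,
      map_smul]
    abel
  have hRAY : R.comp ((A - z • (1 : H_A →L[ℂ] H_A)).comp Y) = Y := by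
    rw [← ContinuousLinearMap.comp_assoc]
    change (R * (A - z • (1 : H_A →L[ℂ] H_A))).comp Y = Y
    rw [hR, ContinuousLinearMap.one_def, ContinuousLinearMap.id_comp]
  rw [hB]
  ext x
  simp [ContinuousLinearMap.comp_apply, ContinuousLinearMap.sub_apply,
    ContinuousLinearMap.add_apply, ContinuousLinearMap.smul_apply, map_sub, map_add, map_smul]
  have h := congrArg (fun (f : H_D →L[ℂ] H_A) => C (f x)) hRAY
  simp [ContinuousLinearMap.comp_apply] at h
  rw [sub_eq_iff_eq_add] at h
  rw [h]
  simp only [smul_sub, smul_add, smul_neg]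
  abel
end

section
/- Suppose the bounded operator Y : H_D → H_A is a solution of the Riccati equation YD − AY + YCY = B. Set Z̃_A := A − YC. Then for every z in the resolvent set of D the Schur complement admits the left factorization M_A(z) = (Z̃_A − z·I) ∘ W̃_A(z), where W̃_A(z) := I + Y(D − z)^{-1}C. -/
/-- If `Y` solves the dual Riccati equation `YD − AY + YCY = B` and `Z̃_A := A − YC`, then
for every `z` in the resolvent set of `D` the Schur complement
`M_A(z) = A − z − B(D − z)⁻¹C` admits the left factorization
`M_A(z) = (Z̃_A − z)·W̃_A(z)` with `W̃_A(z) = I + Y(D − z)⁻¹C`. -/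
theorem schur_complement_factorization_left {H_A H_D : Type*}
    [NormedAddCommGroup H_A] [InnerProductSpace ℂ H_A] [CompleteSpace H_A]
    [NormedAddCommGroup H_D] [InnerProductSpace ℂ H_D] [CompleteSpace H_D]
    (A : H_A →L[ℂ] H_A) (B : H_D →L[ℂ] H_A) (C : H_A →L[ℂ] H_D) (D : H_D →L[ℂ] H_D)
    (Y : H_D →L[ℂ] H_A)
    (hY : Y.comp D - A.comp Y + (Y.comp C).comp Y = B)
    (z : ℂ) (hz : z ∈ resolventSet ℂ D) :
    A - z • (1 : H_A →L[ℂ] H_A)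
        - B.comp ((Ring.inverse (D - z • (1 : H_D →L[ℂ] H_D))).comp C) =
      (A - Y.comp C - z • (1 : H_A →L[ℂ] H_A)).comp
        ((1 : H_A →L[ℂ] H_A)
          + Y.comp ((Ring.inverse (D - z • (1 : H_D →L[ℂ] H_D))).comp C)) := by
  set R := Ring.inverse (D - z • (1 : H_D →L[ℂ] H_D)) with hR
  have hu : IsUnit (D - z • (1 : H_D →L[ℂ] H_D)) := by
    have := hz
    rw [resolventSet, Set.mem_setOf_eq] at this
    simpa [Algebra.algebraMap_eq_smul_one] using this.neg
  have h1 : (D - z • (1 : H_D →L[ℂ] H_D)) * R = 1 := Ring.mul_inverse_cancel _ hu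
  have hDR : D.comp R = 1 + z • R := by
    have : D * R - z • R = 1 := by
      calc D * R - z • R = (D - z • 1) * R := by rw [sub_mul, smul_mul_assoc, one_mul]
      _ = 1 := h1
    have := this
    rw [sub_eq_iff_eq_add] at this
    simpa [ContinuousLinearMap.mul_def, add_comm] using this
  rw [← hY]
  simp only [ContinuousLinearMap.add_comp, ContinuousLinearMap.sub_comp,
    ContinuousLinearMap.comp_add, ContinuousLinearMap.comp_sub,
    ContinuousLinearMap.smul_comp, ContinuousLinearMap.comp_smul,
    ContinuousLinearMap.comp_assoc, ContinuousLinearMap.one_def, ContinuousLinearMap.id_comp,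
    ContinuousLinearMap.comp_id, hDR]
  have h2 : Y.comp (D.comp (R.comp C)) = Y.comp C + z • Y.comp (R.comp C) := by
    rw [← ContinuousLinearMap.comp_assoc D R C, hDR, ContinuousLinearMap.add_comp,
      ContinuousLinearMap.smul_comp, ContinuousLinearMap.one_def,
      ContinuousLinearMap.id_comp, ContinuousLinearMap.comp_add,
      ContinuousLinearMap.comp_smul]
  rw [h2]
  abel
end

section
/- Suppose the bounded operator X : H_A → H_D is a solution of the Riccati equation XA − DX + XBX = C. Set Z̃_D := D − XB. Then for every z in the resolvent set of A the Schur complement admits the left factorization M_D(z) = (Z̃_D − z·I) ∘ W̃_D(z), where W̃_D(z) := I + X(A − z)^{-1}B. -/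
set_option maxHeartbeats 1000000

/-- If `X` solves the Riccati equation `XA − DX + XBX = C` and `Z̃_D := D − XB`, then
for every `z` in the resolvent set of `A` the Schur complement
`M_D(z) = D − z − C(A − z)⁻¹B` admits the left factorization
`M_D(z) = (Z̃_D − z)·W̃_D(z)` with `W̃_D(z) = I + X(A − z)⁻¹B`. -/
theorem schur_complement_factorization_left_D {H_A H_D : Type*}
    [NormedAddCommGroup H_A] [InnerProductSpace ℂ H_A] [CompleteSpace H_A]
    [NormedAddCommGroup H_D] [InnerProductSpace ℂ H_D] [CompleteSpace H_D]
    (A : H_A →L[ℂ] H_A) (B : H_D →L[ℂ] H_A) (C : H_A →L[ℂ] H_D) (D : H_D →L[ℂ] H_D)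
    (X : H_A →L[ℂ] H_D)
    (hX : X.comp A - D.comp X + (X.comp B).comp X = C)
    (z : ℂ) (hz : z ∈ resolventSet ℂ A) :
    D - z • (1 : H_D →L[ℂ] H_D)
        - C.comp ((Ring.inverse (A - z • (1 : H_A →L[ℂ] H_A))).comp B) =
      (D - X.comp B - z • (1 : H_D →L[ℂ] H_D)).comp
        ((1 : H_D →L[ℂ] H_D)
          + X.comp ((Ring.inverse (A - z • (1 : H_A →L[ℂ] H_A))).comp B)) := by
  set R := Ring.inverse (A - z • (1 : H_A →L[ℂ] H_A)) with hR
  have hu : IsUnit (A - z • (1 : H_A →L[ℂ] H_A)) := by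
    have h := hz
    rw [resolventSet, Set.mem_setOf_eq] at h
    have := h.neg
    simpa [Algebra.algebraMap_eq_smul_one, neg_sub] using this
  have h1 : (A - z • (1 : H_A →L[ℂ] H_A)).comp R = 1 := by
    simpa [hR, ContinuousLinearMap.mul_def] using Ring.mul_inverse_cancel _ hu
  have hkey : A.comp (R.comp B) - z • (R.comp B) = B := by
    have := congrArg (fun T => T.comp B) h1
    simpa [ContinuousLinearMap.sub_comp, ContinuousLinearMap.smul_comp,
      ContinuousLinearMap.comp_assoc, ContinuousLinearMap.one_def,
      ContinuousLinearMap.id_comp] using this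
  have hkey2 : X.comp (A.comp (R.comp B)) = z • X.comp (R.comp B) + X.comp B := by
    have h2 : A.comp (R.comp B) = B + z • R.comp B := sub_eq_iff_eq_add.mp hkey
    rw [h2, ContinuousLinearMap.comp_add, ContinuousLinearMap.comp_smul]
    abel
  rw [← hX]
  simp only [ContinuousLinearMap.comp_add, ContinuousLinearMap.add_comp,
    ContinuousLinearMap.sub_comp, ContinuousLinearMap.comp_sub,
    ContinuousLinearMap.smul_comp, ContinuousLinearMap.comp_assoc,
    ContinuousLinearMap.one_def, ContinuousLinearMap.comp_id, ContinuousLinearMap.id_comp]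
  rw [hkey2]
  abel
end

section
/- Suppose X : H_A → H_D is a bounded solution of XA − DX + XBX = C and Y : H_D → H_A is a bounded solution of YD − AY + YCY = B. Let Q be the bounded operator on H_A × H_D defined by Q(x, y) = (Yy, Xx), and let Z be the block-diagonal operator Z(x, y) = ((A + BX)x, (D + CY)y). Then L ∘ (I + Q) = (I + Q) ∘ Z. If moreover 1 does not belong to the spectrum of XY and 1 does not belong to the spectrum of YX, then I + Q is boundedly invertible and L = (I + Q) ∘ Z ∘ (I + Q)^{-1}. -/
/-- If `X` and `Y` solve the pair of Riccati equations associated with the block operator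
matrix `L`, and `Q(x,y) = (Yy, Xx)`, `Z(x,y) = ((A+BX)x, (D+CY)y)`, then
`L(I+Q) = (I+Q)Z`; if moreover `1 ∉ σ(XY)` and `1 ∉ σ(YX)`, then `I+Q` is boundedly
invertible and `L = (I+Q) Z (I+Q)⁻¹`. -/
theorem block_diagonalization_plus {H_A H_D : Type*}
    [NormedAddCommGroup H_A] [InnerProductSpace ℂ H_A] [CompleteSpace H_A]
    [NormedAddCommGroup H_D] [InnerProductSpace ℂ H_D] [CompleteSpace H_D]
    (A : H_A →L[ℂ] H_A) (B : H_D →L[ℂ] H_A) (C : H_A →L[ℂ] H_D) (D : H_D →L[ℂ] H_D)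
    (L : (H_A × H_D) →L[ℂ] (H_A × H_D))
    (hL : ∀ (x : H_A) (y : H_D), L (x, y) = (A x + B y, C x + D y))
    (X : H_A →L[ℂ] H_D) (Y : H_D →L[ℂ] H_A)
    (hX : X.comp A - D.comp X + (X.comp B).comp X = C)
    (hY : Y.comp D - A.comp Y + (Y.comp C).comp Y = B)
    (Q Z : (H_A × H_D) →L[ℂ] (H_A × H_D))
    (hQ : ∀ (x : H_A) (y : H_D), Q (x, y) = (Y y, X x))
    (hZ : ∀ (x : H_A) (y : H_D), Z (x, y) = ((A + B.comp X) x, (D + C.comp Y) y)) :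
    L.comp (1 + Q) = (1 + Q).comp Z ∧
      ((1 : ℂ) ∉ spectrum ℂ (X.comp Y) → (1 : ℂ) ∉ spectrum ℂ (Y.comp X) →
        IsUnit (1 + Q) ∧ L = ((1 + Q) * Z) * Ring.inverse (1 + Q)) := by
  have hXx : ∀ x, X (A x) - D (X x) + X (B (X x)) = C x := fun x => by
    have := ContinuousLinearMap.ext_iff.mp hX x
    simpa using this
  have hYy : ∀ y, Y (D y) - A (Y y) + Y (C (Y y)) = B y := fun y => by
    have := ContinuousLinearMap.ext_iff.mp hY y
    simpa using this
  have comp_eq : L.comp (1 + Q) = (1 + Q).comp Z := by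
    apply ContinuousLinearMap.ext
    rintro ⟨x, y⟩
    simp only [ContinuousLinearMap.comp_apply, ContinuousLinearMap.add_apply,
      ContinuousLinearMap.one_apply, hQ, hZ, Prod.mk_add_mk, hL, map_add]
    rw [Prod.mk.injEq]
    exact ⟨by rw [← hYy y]; abel, by rw [← hXx x]; abel⟩
  refine ⟨comp_eq, fun h1 h2 => ?_⟩
  rw [spectrum.notMem_iff, map_one] at h1 h2
  -- h1 : IsUnit (1 - X.comp Y), h2 : IsUnit (1 - Y.comp X)
  have c2 : ∀ x, Ring.inverse (1 - Y.comp X) x - Y (X (Ring.inverse (1 - Y.comp X) x)) = x :=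
    fun x => by
    simpa [ContinuousLinearMap.mul_apply] using
      ContinuousLinearMap.ext_iff.mp (Ring.mul_inverse_cancel _ h2) x
  have c2' : ∀ x, Ring.inverse (1 - Y.comp X) (x - Y (X x)) = x := fun x => by
    simpa [ContinuousLinearMap.mul_apply] using
      ContinuousLinearMap.ext_iff.mp (Ring.inverse_mul_cancel _ h2) x
  have c1 : ∀ y, Ring.inverse (1 - X.comp Y) y - X (Y (Ring.inverse (1 - X.comp Y) y)) = y :=
    fun y => by
    simpa [ContinuousLinearMap.mul_apply] using
      ContinuousLinearMap.ext_iff.mp (Ring.mul_inverse_cancel _ h1) y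
  have c1' : ∀ y, Ring.inverse (1 - X.comp Y) (y - X (Y y)) = y := fun y => by
    simpa [ContinuousLinearMap.mul_apply] using
      ContinuousLinearMap.ext_iff.mp (Ring.inverse_mul_cancel _ h1) y
  have pm : ∀ (x : H_A) (y : H_D),
      ContinuousLinearMap.prodMap (Ring.inverse (1 - Y.comp X)) (Ring.inverse (1 - X.comp Y)) (x, y)
        = (Ring.inverse (1 - Y.comp X) x, Ring.inverse (1 - X.comp Y) y) := fun _ _ => rfl
  have hu : IsUnit (1 - Q * Q) := by
    refine isUnit_iff_exists.mpr
      ⟨ContinuousLinearMap.prodMap (Ring.inverse (1 - Y.comp X)) (Ring.inverse (1 - X.comp Y)),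
        ?_, ?_⟩
    · apply ContinuousLinearMap.ext
      rintro ⟨x, y⟩
      simp only [ContinuousLinearMap.mul_apply, ContinuousLinearMap.sub_apply,
        ContinuousLinearMap.one_apply]
      rw [pm, hQ, hQ, Prod.mk_sub_mk]
      exact congrArg₂ Prod.mk (c2 x) (c1 y)
    · apply ContinuousLinearMap.ext
      rintro ⟨x, y⟩
      simp only [ContinuousLinearMap.mul_apply, ContinuousLinearMap.sub_apply,
        ContinuousLinearMap.one_apply]
      rw [hQ, hQ, Prod.mk_sub_mk, pm]
      exact congrArg₂ Prod.mk (c2' x) (c1' y)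
  set R := Ring.inverse (1 - Q * Q) with hR
  have hiR : (1 - Q * Q) * R = 1 := Ring.mul_inverse_cancel _ hu
  have hRi : R * (1 - Q * Q) = 1 := Ring.inverse_mul_cancel _ hu
  have hab : (1 + Q) * (1 - Q) = 1 - Q * Q := by
    rw [add_mul, one_mul, mul_sub, mul_one]; abel
  have hba : (1 - Q) * (1 + Q) = 1 - Q * Q := by
    rw [mul_add, mul_one, sub_mul, one_mul]; abel
  have hright : (1 + Q) * ((1 - Q) * R) = 1 := by rw [← mul_assoc, hab, hiR]
  have hleft : (R * (1 - Q)) * (1 + Q) = 1 := by rw [mul_assoc, hba, hRi]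
  have heq : R * (1 - Q) = (1 - Q) * R := by
    calc R * (1 - Q) = (R * (1 - Q)) * ((1 + Q) * ((1 - Q) * R)) := by rw [hright, mul_one]
    _ = ((R * (1 - Q)) * (1 + Q)) * ((1 - Q) * R) := by rw [← mul_assoc]
    _ = (1 - Q) * R := by rw [hleft, one_mul]
  have hunit : IsUnit (1 + Q) := ⟨⟨1 + Q, (1 - Q) * R, hright, by rw [← heq]; exact hleft⟩, rfl⟩
  refine ⟨hunit, ?_⟩
  have hmul : L * (1 + Q) = (1 + Q) * Z := by
    rw [ContinuousLinearMap.mul_def, ContinuousLinearMap.mul_def]; exact comp_eq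
  calc L = L * ((1 + Q) * Ring.inverse (1 + Q)) := by
        rw [Ring.mul_inverse_cancel _ hunit, mul_one]
    _ = (L * (1 + Q)) * Ring.inverse (1 + Q) := by rw [mul_assoc]
    _ = ((1 + Q) * Z) * Ring.inverse (1 + Q) := by rw [hmul]
end

section
/- Suppose X : H_A → H_D is a bounded solution of XA − DX + XBX = C and Y : H_D → H_A is a bounded solution of YD − AY + YCY = B. Let Q be the bounded operator on H_A × H_D defined by Q(x, y) = (Yy, Xx), and let Z̃ be the block-diagonal operator Z̃(x, y) = ((A − YC)x, (D − XB)y). Then (I − Q) ∘ L = Z̃ ∘ (I − Q). If moreover 1 does not belong to the spectrum of XY and 1 does not belong to the spectrum of YX, then I − Q is boundedly invertible and L = (I − Q)^{-1} ∘ Z̃ ∘ (I − Q). -/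
/-- If `X` and `Y` solve the pair of Riccati equations associated with the block operator
matrix `L`, and `Q(x,y) = (Yy, Xx)`, `Z̃(x,y) = ((A−YC)x, (D−XB)y)`, then
`(I−Q)L = Z̃(I−Q)`; if moreover `1 ∉ σ(XY)` and `1 ∉ σ(YX)`, then `I−Q` is boundedly
invertible and `L = (I−Q)⁻¹ Z̃ (I−Q)`. -/
theorem block_diagonalization_minus {H_A H_D : Type*}
    [NormedAddCommGroup H_A] [InnerProductSpace ℂ H_A] [CompleteSpace H_A]
    [NormedAddCommGroup H_D] [InnerProductSpace ℂ H_D] [CompleteSpace H_D]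
    (A : H_A →L[ℂ] H_A) (B : H_D →L[ℂ] H_A) (C : H_A →L[ℂ] H_D) (D : H_D →L[ℂ] H_D)
    (L : (H_A × H_D) →L[ℂ] (H_A × H_D))
    (hL : ∀ (x : H_A) (y : H_D), L (x, y) = (A x + B y, C x + D y))
    (X : H_A →L[ℂ] H_D) (Y : H_D →L[ℂ] H_A)
    (hX : X.comp A - D.comp X + (X.comp B).comp X = C)
    (hY : Y.comp D - A.comp Y + (Y.comp C).comp Y = B)
    (Q Zt : (H_A × H_D) →L[ℂ] (H_A × H_D))
    (hQ : ∀ (x : H_A) (y : H_D), Q (x, y) = (Y y, X x))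
    (hZt : ∀ (x : H_A) (y : H_D), Zt (x, y) = ((A - Y.comp C) x, (D - X.comp B) y)) :
    (1 - Q).comp L = Zt.comp (1 - Q) ∧
      ((1 : ℂ) ∉ spectrum ℂ (X.comp Y) → (1 : ℂ) ∉ spectrum ℂ (Y.comp X) →
        IsUnit (1 - Q) ∧ L = (Ring.inverse (1 - Q) * Zt) * (1 - Q)) := by
  have hX' : ∀ x, X (A x) - D (X x) + X (B (X x)) = C x := by
    intro x
    have := congrArg (fun (T : H_A →L[ℂ] H_D) => T x) hX
    simpa using this
  have hY' : ∀ y, Y (D y) - A (Y y) + Y (C (Y y)) = B y := by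
    intro y
    have := congrArg (fun (T : H_D →L[ℂ] H_A) => T y) hY
    simpa using this
  have key : (1 - Q).comp L = Zt.comp (1 - Q) := by
    refine ContinuousLinearMap.ext fun p => ?_
    obtain ⟨x, y⟩ := p
    simp only [ContinuousLinearMap.comp_apply, ContinuousLinearMap.sub_apply,
      ContinuousLinearMap.one_apply, hL, hQ]
    rw [show ((x, y) : H_A × H_D) - (Y y, X x) = (x - Y y, y - X x) from rfl, hZt]
    simp only [ContinuousLinearMap.sub_apply, ContinuousLinearMap.comp_apply,
      map_sub, map_add, Prod.mk_sub_mk, Prod.mk.injEq]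
    constructor
    · rw [← hY' y]; abel
    · rw [← hX' x]; abel
  refine ⟨key, fun h1 h2 => ?_⟩
  have u2 : IsUnit (1 - X.comp Y) := by
    rw [spectrum.notMem_iff] at h1
    simpa using h1
  have u1 : IsUnit (1 - Y.comp X) := by
    rw [spectrum.notMem_iff] at h2
    simpa using h2
  obtain ⟨v1, hv1⟩ := u1
  obtain ⟨v2, hv2⟩ := u2
  set W : (H_A × H_D) →L[ℂ] (H_A × H_D) :=
    ((v1⁻¹ : (H_A →L[ℂ] H_A)ˣ) : H_A →L[ℂ] H_A).prodMap
      ((v2⁻¹ : (H_D →L[ℂ] H_D)ˣ) : H_D →L[ℂ] H_D) with hW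
  have c1 : ((v1⁻¹ : (H_A →L[ℂ] H_A)ˣ) : H_A →L[ℂ] H_A) * (1 - Y.comp X) = 1 := by
    rw [← hv1]; exact v1.inv_mul
  have c1' : (1 - Y.comp X) * ((v1⁻¹ : (H_A →L[ℂ] H_A)ˣ) : H_A →L[ℂ] H_A) = 1 := by
    rw [← hv1]; exact v1.mul_inv
  have c2 : ((v2⁻¹ : (H_D →L[ℂ] H_D)ˣ) : H_D →L[ℂ] H_D) * (1 - X.comp Y) = 1 := by
    rw [← hv2]; exact v2.inv_mul
  have c2' : (1 - X.comp Y) * ((v2⁻¹ : (H_D →L[ℂ] H_D)ˣ) : H_D →L[ℂ] H_D) = 1 := by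
    rw [← hv2]; exact v2.mul_inv
  have hQQ : ∀ p : H_A × H_D, (1 - Q * Q) p = ((1 - Y.comp X) p.1, (1 - X.comp Y) p.2) := by
    rintro ⟨x, y⟩
    simp [ContinuousLinearMap.mul_apply, hQ]
  have hWmul : W * (1 - Q * Q) = 1 := by
    refine ContinuousLinearMap.ext fun p => ?_
    rw [ContinuousLinearMap.mul_apply, hQQ, ContinuousLinearMap.one_apply, hW]
    refine Prod.ext ?_ ?_
    · show ((v1⁻¹ : (H_A →L[ℂ] H_A)ˣ) : H_A →L[ℂ] H_A) ((1 - Y.comp X) p.1) = p.1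
      rw [← ContinuousLinearMap.mul_apply, c1, ContinuousLinearMap.one_apply]
    · show ((v2⁻¹ : (H_D →L[ℂ] H_D)ˣ) : H_D →L[ℂ] H_D) ((1 - X.comp Y) p.2) = p.2
      rw [← ContinuousLinearMap.mul_apply, c2, ContinuousLinearMap.one_apply]
  have hmulW : (1 - Q * Q) * W = 1 := by
    refine ContinuousLinearMap.ext fun p => ?_
    rw [ContinuousLinearMap.mul_apply, ContinuousLinearMap.one_apply, hW, hQQ]
    refine Prod.ext ?_ ?_
    · show (1 - Y.comp X) (((v1⁻¹ : (H_A →L[ℂ] H_A)ˣ) : H_A →L[ℂ] H_A) p.1) = p.1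
      rw [← ContinuousLinearMap.mul_apply, c1', ContinuousLinearMap.one_apply]
    · show (1 - X.comp Y) (((v2⁻¹ : (H_D →L[ℂ] H_D)ˣ) : H_D →L[ℂ] H_D) p.2) = p.2
      rw [← ContinuousLinearMap.mul_apply, c2', ContinuousLinearMap.one_apply]
  have hQcomm : Q * (1 - Q * Q) = (1 - Q * Q) * Q := by
    rw [mul_sub, sub_mul, mul_one, one_mul, mul_assoc]
  have hcomm : Q * W = W * Q := by
    calc Q * W = (W * (1 - Q * Q)) * (Q * W) := by rw [hWmul, one_mul]
    _ = W * (((1 - Q * Q) * Q) * W) := by simp only [mul_assoc]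
    _ = W * ((Q * (1 - Q * Q)) * W) := by rw [hQcomm]
    _ = (W * Q) * ((1 - Q * Q) * W) := by simp only [mul_assoc]
    _ = W * Q := by rw [hmulW, mul_one]
  have hfact : (1 - Q) * (1 + Q) = 1 - Q * Q := by
    rw [sub_mul, one_mul, mul_add, mul_one]; abel
  have hfact' : (1 + Q) * (1 - Q) = 1 - Q * Q := by
    rw [add_mul, one_mul, mul_sub, mul_one]; abel
  have hinv1 : (1 - Q) * ((1 + Q) * W) = 1 := by
    rw [← mul_assoc, hfact, hmulW]
  have hinv2 : ((1 + Q) * W) * (1 - Q) = 1 := by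
    have hc : (1 + Q) * W = W * (1 + Q) := by
      simp only [add_mul, mul_add, one_mul, mul_one, hcomm]
    rw [hc, mul_assoc, hfact', hWmul]
  have hu : IsUnit (1 - Q) := ⟨⟨1 - Q, (1 + Q) * W, hinv1, hinv2⟩, rfl⟩
  refine ⟨hu, ?_⟩
  have hkey : (1 - Q) * L = Zt * (1 - Q) := key
  rw [mul_assoc, ← hkey, ← mul_assoc, Ring.inverse_mul_cancel _ hu, one_mul]
end

section
/- Suppose X : H_A → H_D is a bounded solution of XA − DX + XBX = C and Y : H_D → H_A is a bounded solution of YD − AY + YCY = B. Then (I − YX) ∘ (A + BX) = (A − YC) ∘ (I − YX) as operators on H_A. In particular, if 1 does not belong to the spectrum of YX, then A − YC = (I − YX)(A + BX)(I − YX)^{-1}, so the operators A + BX and A − YC are similar. -/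
/-- If `X` and `Y` solve the pair of Riccati equations, then
`(I − YX)(A + BX) = (A − YC)(I − YX)`; in particular, if `1 ∉ σ(YX)` then
`A − YC = (I − YX)(A + BX)(I − YX)⁻¹`, i.e. `A + BX` and `A − YC` are similar. -/
theorem similarity_ZA {H_A H_D : Type*}
    [NormedAddCommGroup H_A] [InnerProductSpace ℂ H_A] [CompleteSpace H_A]
    [NormedAddCommGroup H_D] [InnerProductSpace ℂ H_D] [CompleteSpace H_D]
    (A : H_A →L[ℂ] H_A) (B : H_D →L[ℂ] H_A) (C : H_A →L[ℂ] H_D) (D : H_D →L[ℂ] H_D)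
    (X : H_A →L[ℂ] H_D) (Y : H_D →L[ℂ] H_A)
    (hX : X.comp A - D.comp X + (X.comp B).comp X = C)
    (hY : Y.comp D - A.comp Y + (Y.comp C).comp Y = B) :
    ((1 : H_A →L[ℂ] H_A) - Y.comp X).comp (A + B.comp X) =
        (A - Y.comp C).comp ((1 : H_A →L[ℂ] H_A) - Y.comp X) ∧
      ((1 : ℂ) ∉ spectrum ℂ (Y.comp X) →
        A - Y.comp C =
          (((1 : H_A →L[ℂ] H_A) - Y.comp X) * (A + B.comp X)) *
            Ring.inverse ((1 : H_A →L[ℂ] H_A) - Y.comp X)) := by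
  have key : ((1 : H_A →L[ℂ] H_A) - Y.comp X).comp (A + B.comp X) =
      (A - Y.comp C).comp ((1 : H_A →L[ℂ] H_A) - Y.comp X) := by
    have hC : Y.comp C = Y.comp (X.comp A - D.comp X + (X.comp B).comp X) := by rw [hX]
    have hB : B.comp X = (Y.comp D - A.comp Y + (Y.comp C).comp Y).comp X := by rw [hY]
    simp only [ContinuousLinearMap.comp_sub, ContinuousLinearMap.comp_add,
      ContinuousLinearMap.sub_comp, ContinuousLinearMap.add_comp,
      ContinuousLinearMap.comp_assoc] at *
    simp only [ContinuousLinearMap.one_def, ContinuousLinearMap.comp_id,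
      ContinuousLinearMap.id_comp] at *
    rw [hC, hB]
    abel
  refine ⟨key, fun h1 => ?_⟩
  have hu : IsUnit ((1 : H_A →L[ℂ] H_A) - Y.comp X) := by
    have := spectrum.notMem_iff.mp h1
    simpa using this
  rw [show ((1 : H_A →L[ℂ] H_A) - Y.comp X) * (A + B.comp X) =
      ((1 : H_A →L[ℂ] H_A) - Y.comp X).comp (A + B.comp X) from rfl, key]
  rw [show (A - Y.comp C).comp ((1 : H_A →L[ℂ] H_A) - Y.comp X) =
      (A - Y.comp C) * ((1 : H_A →L[ℂ] H_A) - Y.comp X) from rfl]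
  rw [mul_assoc, Ring.mul_inverse_cancel _ hu, mul_one]
end

section
/- Suppose X : H_A → H_D is a bounded solution of XA − DX + XBX = C and Y : H_D → H_A is a bounded solution of YD − AY + YCY = B. Then (I − XY) ∘ (D + CY) = (D − XB) ∘ (I − XY) as operators on H_D. In particular, if 1 does not belong to the spectrum of XY, then D − XB = (I − XY)(D + CY)(I − XY)^{-1}, so the operators D + CY and D − XB are similar. -/
/-- If `X` and `Y` solve the pair of Riccati equations, then
`(I − XY)(D + CY) = (D − XB)(I − XY)`; in particular, if `1 ∉ σ(XY)` then
`D − XB = (I − XY)(D + CY)(I − XY)⁻¹`, i.e. `D + CY` and `D − XB` are similar. -/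
theorem similarity_ZD {H_A H_D : Type*}
    [NormedAddCommGroup H_A] [InnerProductSpace ℂ H_A] [CompleteSpace H_A]
    [NormedAddCommGroup H_D] [InnerProductSpace ℂ H_D] [CompleteSpace H_D]
    (A : H_A →L[ℂ] H_A) (B : H_D →L[ℂ] H_A) (C : H_A →L[ℂ] H_D) (D : H_D →L[ℂ] H_D)
    (X : H_A →L[ℂ] H_D) (Y : H_D →L[ℂ] H_A)
    (hX : X.comp A - D.comp X + (X.comp B).comp X = C)
    (hY : Y.comp D - A.comp Y + (Y.comp C).comp Y = B) :
    ((1 : H_D →L[ℂ] H_D) - X.comp Y).comp (D + C.comp Y) =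
        (D - X.comp B).comp ((1 : H_D →L[ℂ] H_D) - X.comp Y) ∧
      ((1 : ℂ) ∉ spectrum ℂ (X.comp Y) →
        D - X.comp B =
          (((1 : H_D →L[ℂ] H_D) - X.comp Y) * (D + C.comp Y)) *
            Ring.inverse ((1 : H_D →L[ℂ] H_D) - X.comp Y)) := by
  have key : ((1 : H_D →L[ℂ] H_D) - X.comp Y).comp (D + C.comp Y) =
      (D - X.comp B).comp ((1 : H_D →L[ℂ] H_D) - X.comp Y) := by
    ext v
    have h1 : X (A (Y v)) - D (X (Y v)) + X (B (X (Y v))) = C (Y v) := by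
      have := congrFun (congrArg DFunLike.coe hX) (Y v)
      simpa using this
    have h2 : X (Y (D v)) - X (A (Y v)) + X (Y (C (Y v))) = X (B v) := by
      have := congrFun (congrArg DFunLike.coe hY) v
      have := congrArg X this
      simpa using this
    simp only [ContinuousLinearMap.comp_apply, ContinuousLinearMap.sub_apply,
      ContinuousLinearMap.add_apply, ContinuousLinearMap.one_apply, map_sub, map_add]
    linear_combination (norm := module) -h1 - h2
  refine ⟨key, fun h1 => ?_⟩
  have hu : IsUnit ((1 : H_D →L[ℂ] H_D) - X.comp Y) := by
    have := spectrum.notMem_iff.mp h1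
    simpa using this
  have hmul : ((1 : H_D →L[ℂ] H_D) - X.comp Y) * (D + C.comp Y) =
      (D - X.comp B) * ((1 : H_D →L[ℂ] H_D) - X.comp Y) := key
  rw [hmul, mul_assoc, Ring.mul_inverse_cancel _ hu, mul_one]
end

section
/- Suppose X : H_A → H_D is a bounded solution of XA − DX + XBX = C and Y : H_D → H_A is a bounded solution of YD − AY + YCY = B, and that 1 does not belong to the spectrum of XY and 1 does not belong to the spectrum of YX. Then the spectrum of the block operator matrix L equals the union of the spectrum of A + BX (an operator on H_A) and the spectrum of D + CY (an operator on H_D). -/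
open ContinuousLinearMap

private theorem isUnit_prodMap_iff {E F : Type*} [NormedAddCommGroup E] [NormedSpace ℂ E]
    [NormedAddCommGroup F] [NormedSpace ℂ F]
    {P : E →L[ℂ] E} {Q : F →L[ℂ] F} :
    IsUnit (P.prodMap Q) ↔ IsUnit P ∧ IsUnit Q := by
  constructor
  · rintro ⟨u, hu⟩
    have h1 : (P.prodMap Q) * ↑u⁻¹ = 1 := by rw [← hu]; exact u.mul_inv
    have h2 : (↑u⁻¹ : (E × F) →L[ℂ] (E × F)) * (P.prodMap Q) = 1 := by rw [← hu]; exact u.inv_mul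
    set R : (E × F) →L[ℂ] (E × F) := ↑u⁻¹ with hR
    have h1p : ∀ p : E × F, (P (R p).1, Q (R p).2) = p := fun p => by
      have := DFunLike.congr_fun h1 p
      simpa [mul_apply, coe_prodMap', Prod.map] using this
    have h2p : ∀ p : E × F, R (P p.1, Q p.2) = p := fun p => by
      have := DFunLike.congr_fun h2 p
      simpa [mul_apply, coe_prodMap', Prod.map] using this
    refine ⟨⟨⟨P, (fst ℂ E F).comp (R.comp (inl ℂ E F)), ?_, ?_⟩, rfl⟩,
            ⟨⟨Q, (snd ℂ E F).comp (R.comp (inr ℂ E F)), ?_, ?_⟩, rfl⟩⟩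
    · refine ContinuousLinearMap.ext fun a => ?_
      have := congrArg Prod.fst (h1p (a, 0))
      simpa [mul_apply] using this
    · refine ContinuousLinearMap.ext fun a => ?_
      have := congrArg Prod.fst (h2p (a, 0))
      simpa [mul_apply] using this
    · refine ContinuousLinearMap.ext fun b => ?_
      have := congrArg Prod.snd (h1p (0, b))
      simpa [mul_apply] using this
    · refine ContinuousLinearMap.ext fun b => ?_
      have := congrArg Prod.snd (h2p (0, b))
      simpa [mul_apply] using this
  · rintro ⟨⟨p, hp⟩, ⟨q, hq⟩⟩
    subst hp; subst hq
    have hp1 : ∀ x : E, (↑p : E →L[ℂ] E) ((↑p⁻¹ : E →L[ℂ] E) x) = x := fun x => by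
      have := DFunLike.congr_fun p.mul_inv x; rwa [ContinuousLinearMap.mul_apply, ContinuousLinearMap.one_apply] at this
    have hp2 : ∀ x : E, (↑p⁻¹ : E →L[ℂ] E) ((↑p : E →L[ℂ] E) x) = x := fun x => by
      have := DFunLike.congr_fun p.inv_mul x; rwa [ContinuousLinearMap.mul_apply, ContinuousLinearMap.one_apply] at this
    have hq1 : ∀ x : F, (↑q : F →L[ℂ] F) ((↑q⁻¹ : F →L[ℂ] F) x) = x := fun x => by
      have := DFunLike.congr_fun q.mul_inv x; rwa [ContinuousLinearMap.mul_apply, ContinuousLinearMap.one_apply] at this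
    have hq2 : ∀ x : F, (↑q⁻¹ : F →L[ℂ] F) ((↑q : F →L[ℂ] F) x) = x := fun x => by
      have := DFunLike.congr_fun q.inv_mul x; rwa [ContinuousLinearMap.mul_apply, ContinuousLinearMap.one_apply] at this
    refine ⟨⟨(↑p : E →L[ℂ] E).prodMap ↑q, (↑p⁻¹ : E →L[ℂ] E).prodMap ↑q⁻¹, ?_, ?_⟩, rfl⟩
    · refine ContinuousLinearMap.ext fun x => ?_
      simp [mul_apply, coe_prodMap', Prod.map, hp1, hq1]
    · refine ContinuousLinearMap.ext fun x => ?_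
      simp [mul_apply, coe_prodMap', Prod.map, hp2, hq2]

/-- If `X` and `Y` solve the pair of Riccati equations associated with the block operator
matrix `L` and `1 ∉ σ(XY)`, `1 ∉ σ(YX)`, then the spectrum of `L` is the union of the
spectra of `A + BX` and `D + CY`. -/
theorem spectrum_block_matrix_union {H_A H_D : Type*}
    [NormedAddCommGroup H_A] [InnerProductSpace ℂ H_A] [CompleteSpace H_A]
    [NormedAddCommGroup H_D] [InnerProductSpace ℂ H_D] [CompleteSpace H_D]
    (A : H_A →L[ℂ] H_A) (B : H_D →L[ℂ] H_A) (C : H_A →L[ℂ] H_D) (D : H_D →L[ℂ] H_D)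
    (L : (H_A × H_D) →L[ℂ] (H_A × H_D))
    (hL : ∀ (x : H_A) (y : H_D), L (x, y) = (A x + B y, C x + D y))
    (X : H_A →L[ℂ] H_D) (Y : H_D →L[ℂ] H_A)
    (hX : X.comp A - D.comp X + (X.comp B).comp X = C)
    (hY : Y.comp D - A.comp Y + (Y.comp C).comp Y = B)
    (hXY : (1 : ℂ) ∉ spectrum ℂ (X.comp Y))
    (hYX : (1 : ℂ) ∉ spectrum ℂ (Y.comp X)) :
    spectrum ℂ L = spectrum ℂ (A + B.comp X) ∪ spectrum ℂ (D + C.comp Y) := by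
  rw [spectrum.notMem_iff, map_one] at hXY hYX
  obtain ⟨uF, huF⟩ := hXY
  obtain ⟨uE, huE⟩ := hYX
  set E : H_A →L[ℂ] H_A := ↑uE⁻¹ with hEdef
  set F : H_D →L[ℂ] H_D := ↑uF⁻¹ with hFdef
  have hE1op : (1 - Y.comp X) * E = 1 := by rw [← huE]; exact uE.mul_inv
  have hE2op : E * (1 - Y.comp X) = 1 := by rw [← huE]; exact uE.inv_mul
  have hF1op : (1 - X.comp Y) * F = 1 := by rw [← huF]; exact uF.mul_inv
  have hF2op : F * (1 - X.comp Y) = 1 := by rw [← huF]; exact uF.inv_mul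
  have hE1 : ∀ a, E a - Y (X (E a)) = a := fun a => by
    have := DFunLike.congr_fun hE1op a
    simpa [mul_apply, sub_apply, one_apply, comp_apply] using this
  have hE2 : ∀ a, E (a - Y (X a)) = a := fun a => by
    have := DFunLike.congr_fun hE2op a
    simpa [mul_apply, sub_apply, one_apply, comp_apply] using this
  have hF1 : ∀ b, F b - X (Y (F b)) = b := fun b => by
    have := DFunLike.congr_fun hF1op b
    simpa [mul_apply, sub_apply, one_apply, comp_apply] using this
  have hF2 : ∀ b, F (b - X (Y b)) = b := fun b => by
    have := DFunLike.congr_fun hF2op b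
    simpa [mul_apply, sub_apply, one_apply, comp_apply] using this
  have hFX : ∀ a, F (X a) = X (E a) := fun a => by
    have h : X a = X (E a) - X (Y (X (E a))) := by
      conv_lhs => rw [← hE1 a]
      exact map_sub X _ _
    rw [h, hF2]
  have hYF : ∀ b, Y (F b) = E (Y b) := fun b => by
    have h : Y b = Y (F b) - Y (X (Y (F b))) := by
      conv_lhs => rw [← hF1 b]
      exact map_sub Y _ _
    rw [h, hE2]
  have hXp : ∀ a, X (A a) - D (X a) + X (B (X a)) = C a := fun a => by
    have := DFunLike.congr_fun hX a
    simpa [sub_apply, add_apply, comp_apply] using this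
  have hYp : ∀ b, Y (D b) - A (Y b) + Y (C (Y b)) = B b := fun b => by
    have := DFunLike.congr_fun hY b
    simpa [sub_apply, add_apply, comp_apply] using this
  set S : (H_A × H_D) →L[ℂ] (H_A × H_D) :=
    (fst ℂ H_A H_D + Y.comp (snd ℂ H_A H_D)).prod (X.comp (fst ℂ H_A H_D) + snd ℂ H_A H_D)
    with hSdef
  set T : (H_A × H_D) →L[ℂ] (H_A × H_D) :=
    (E.comp (fst ℂ H_A H_D) - Y.comp (F.comp (snd ℂ H_A H_D))).prod
      (F.comp (snd ℂ H_A H_D) - X.comp (E.comp (fst ℂ H_A H_D)))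
    with hTdef
  set M : (H_A × H_D) →L[ℂ] (H_A × H_D) := (A + B.comp X).prodMap (D + C.comp Y) with hMdef
  have hSapp : ∀ p : H_A × H_D, S p = (p.1 + Y p.2, X p.1 + p.2) := fun p => rfl
  have hTapp : ∀ p : H_A × H_D, T p = (E p.1 - Y (F p.2), F p.2 - X (E p.1)) := fun p => rfl
  have hMapp : ∀ p : H_A × H_D, M p = (A p.1 + B (X p.1), D p.2 + C (Y p.2)) := fun p => rfl
  have hST : S * T = 1 := by
    refine ContinuousLinearMap.ext fun p => ?_
    rw [ContinuousLinearMap.mul_apply, ContinuousLinearMap.one_apply, hTapp, hSapp]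
    refine Prod.ext ?_ ?_
    · show E p.1 - Y (F p.2) + Y (F p.2 - X (E p.1)) = p.1
      conv_rhs => rw [← hE1 p.1]
      simp only [map_sub]
      abel
    · show X (E p.1 - Y (F p.2)) + (F p.2 - X (E p.1)) = p.2
      conv_rhs => rw [← hF1 p.2]
      simp only [map_sub]
      abel
  have hTS : T * S = 1 := by
    refine ContinuousLinearMap.ext fun p => ?_
    rw [ContinuousLinearMap.mul_apply, ContinuousLinearMap.one_apply, hSapp, hTapp]
    refine Prod.ext ?_ ?_
    · show E (p.1 + Y p.2) - Y (F (X p.1 + p.2)) = p.1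
      conv_rhs => rw [← hE1 p.1]
      simp only [map_add, hFX, hYF]
      abel
    · show F (X p.1 + p.2) - X (E (p.1 + Y p.2)) = p.2
      conv_rhs => rw [← hF1 p.2]
      simp only [map_add, hFX, ← hYF]
      abel
  have hLS : L * S = S * M := by
    refine ContinuousLinearMap.ext fun p => ?_
    rw [ContinuousLinearMap.mul_apply, ContinuousLinearMap.mul_apply, hSapp, hMapp, hSapp, hL]
    refine Prod.ext ?_ ?_
    · show A (p.1 + Y p.2) + B (X p.1 + p.2) = A p.1 + B (X p.1) + Y (D p.2 + C (Y p.2))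
      simp only [map_add]
      rw [← hYp p.2]
      abel
    · show C (p.1 + Y p.2) + D (X p.1 + p.2) = X (A p.1 + B (X p.1)) + (D p.2 + C (Y p.2))
      simp only [map_add]
      rw [← hXp p.1]
      abel
  set u : ((H_A × H_D) →L[ℂ] (H_A × H_D))ˣ := ⟨S, T, hST, hTS⟩ with hu
  have hL_eq : L = ↑u * M * ↑u⁻¹ := by
    have : (↑u : (H_A × H_D) →L[ℂ] (H_A × H_D)) = S := rfl
    have hinv : (↑u⁻¹ : (H_A × H_D) →L[ℂ] (H_A × H_D)) = T := rfl
    rw [this, hinv]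
    calc L = L * (S * T) := by rw [hST, mul_one]
    _ = (L * S) * T := by rw [mul_assoc]
    _ = S * M * T := by rw [hLS]
  rw [hL_eq, spectrum.units_conjugate]
  ext μ
  simp only [Set.mem_union, spectrum.mem_iff]
  have key : algebraMap ℂ ((H_A × H_D) →L[ℂ] (H_A × H_D)) μ - M =
      (algebraMap ℂ (H_A →L[ℂ] H_A) μ - (A + B.comp X)).prodMap
        (algebraMap ℂ (H_D →L[ℂ] H_D) μ - (D + C.comp Y)) := by
    refine ContinuousLinearMap.ext fun p => ?_
    simp [Algebra.algebraMap_eq_smul_one, hMapp, coe_prodMap', Prod.map, Prod.smul_def,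
      sub_apply, smul_apply, one_apply]
  rw [key, isUnit_prodMap_iff]
  tauto
end

section
/- There exists a bounded operator T on H with ‖T‖ ≤ r := d/2 − √(d²/4 − V) such that, setting Z := A + T, the operator Z − γ(t)·I is boundedly invertible for every t ∈ [0,1] and Z = A − ∫₀¹ F(γ(t)) ∘ (Z − γ(t))^{-1} γ'(t) dt (a Bochner integral of operator-valued functions). Moreover, T is unique in the following sense: if T' is any bounded operator with ‖T'‖ ≤ d − √V such that A + T' − γ(t) is boundedly invertible for all t ∈ [0,1] and A + T' = A − ∫₀¹ F(γ(t)) (A + T' − γ(t))^{-1} γ'(t) dt, then T' = T. -/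
open scoped ENNReal Pointwise


lemma aux_inv_sub_inv {R : Type*} [Ring R] {a b : R} (ha : IsUnit a) (hb : IsUnit b) :
    Ring.inverse a - Ring.inverse b = Ring.inverse a * (b - a) * Ring.inverse b := by
  obtain ⟨u, rfl⟩ := ha; obtain ⟨v, rfl⟩ := hb
  rw [Ring.inverse_unit, Ring.inverse_unit, mul_sub, sub_mul, mul_assoc]
  simp [mul_assoc]

lemma aux_pert {R : Type*} [NormedRing R] [NormOneClass R] [CompleteSpace R]
    {B T : R} {d : ℝ} (hd : 0 < d) (hB : IsUnit B)
    (hBinv : ‖Ring.inverse B‖ ≤ 1 / d) (hT : ‖T‖ < d) :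
    IsUnit (B + T) ∧ ‖Ring.inverse (B + T)‖ ≤ 1 / (d - ‖T‖) := by
  set w := Ring.inverse B * T with hw_def
  have hw : ‖w‖ ≤ ‖T‖ / d := by
    calc ‖w‖ ≤ ‖Ring.inverse B‖ * ‖T‖ := norm_mul_le _ _
    _ ≤ (1 / d) * ‖T‖ := by gcongr
    _ = ‖T‖ / d := by ring
  have hw1 : ‖w‖ < 1 := lt_of_le_of_lt hw (by rw [div_lt_one hd]; exact hT)
  have hw1' : ‖-w‖ < 1 := by rwa [norm_neg]
  have hunit1 : IsUnit (1 + w) := by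
    have := isUnit_one_sub_of_norm_lt_one hw1'
    simpa [sub_neg_eq_add] using this
  have factor : B + T = B * (1 + w) := by
    rw [mul_add, mul_one, hw_def, ← mul_assoc, Ring.mul_inverse_cancel B hB, one_mul]
  have hu : IsUnit (B + T) := factor ▸ hB.mul hunit1
  refine ⟨hu, ?_⟩
  have hinv_eq : Ring.inverse (B + T) = Ring.inverse (1 + w) * Ring.inverse B := by
    rw [factor]
    obtain ⟨U, rfl⟩ := hB
    obtain ⟨W, hW⟩ := hunit1
    rw [← hW, ← Units.val_mul, Ring.inverse_unit, Ring.inverse_unit, Ring.inverse_unit,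
      mul_inv_rev, Units.val_mul]
  have hgeom : ‖Ring.inverse (1 + w)‖ ≤ (1 - ‖w‖)⁻¹ := by
    have h1 : Ring.inverse (1 + w) = ∑' n : ℕ, (-w) ^ n := by
      rw [geom_series_eq_inverse (-w) hw1', sub_neg_eq_add]
    rw [h1]
    refine tsum_of_norm_bounded (hasSum_geometric_of_lt_one (norm_nonneg w) hw1) fun n => ?_
    cases n with
    | zero => simp
    | succ m => calc ‖(-w) ^ (m+1)‖ ≤ ‖-w‖ ^ (m+1) := norm_pow_le' _ (Nat.succ_pos m)
               _ = ‖w‖ ^ (m+1) := by rw [norm_neg]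
  have hdT : 0 < d - ‖T‖ := by linarith
  have h2 : (1 - ‖w‖)⁻¹ ≤ d / (d - ‖T‖) := by
    rw [inv_le_iff_one_le_mul₀ (by linarith)]
    rw [div_mul_eq_mul_div, le_div_iff₀ hdT]
    have : ‖w‖ * d ≤ ‖T‖ := by
      calc ‖w‖ * d ≤ (‖T‖/d) * d := by gcongr
      _ = ‖T‖ := by field_simp
    nlinarith
  calc ‖Ring.inverse (B + T)‖ ≤ ‖Ring.inverse (1 + w)‖ * ‖Ring.inverse B‖ := by
        rw [hinv_eq]; exact norm_mul_le _ _
  _ ≤ (d / (d - ‖T‖)) * (1/d) := by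
      apply mul_le_mul (le_trans hgeom h2) hBinv (norm_nonneg _) (by positivity)
  _ = 1 / (d - ‖T‖) := by field_simp

open scoped ENNReal Pointwise

lemma aux_resolvent {H : Type*} [NormedAddCommGroup H] [InnerProductSpace ℂ H] [CompleteSpace H]
    (A : H →L[ℂ] H) (hA : IsSelfAdjoint A) {z : ℂ} {d : ℝ} (hdpos : 0 < d)
    (hz : ∀ lam ∈ spectrum ℂ A, d ≤ dist lam z) :
    IsUnit (A - z • (1 : H →L[ℂ] H)) ∧
      ‖Ring.inverse (A - z • (1 : H →L[ℂ] H))‖ ≤ 1 / d := by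
  have halg : z • (1 : H →L[ℂ] H) = algebraMap ℂ (H →L[ℂ] H) z :=
    (Algebra.algebraMap_eq_smul_one z).symm
  have hznot : z ∉ spectrum ℂ A := by
    intro h
    have := hz z h
    simp only [dist_self] at this
    linarith
  have hu : IsUnit (A - z • (1 : H →L[ℂ] H)) := by
    have h1 : IsUnit (algebraMap ℂ (H →L[ℂ] H) z - A) := spectrum.notMem_iff.mp hznot
    have h2 : A - z • (1 : H →L[ℂ] H) = -(algebraMap ℂ (H →L[ℂ] H) z - A) := by
      rw [halg]; abel
    rw [h2]; exact h1.neg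
  refine ⟨hu, ?_⟩
  set B := A - z • (1 : H →L[ℂ] H) with hB_def
  have hcomm : Commute (star B) B := by
    have hstar : star B = A - (starRingEnd ℂ z) • (1 : H →L[ℂ] H) := by
      rw [hB_def, star_sub, hA.star_eq, star_smul, star_one]
      rfl
    rw [hB_def, hstar]
    show _ * _ = _ * _
    simp only [sub_mul, mul_sub, smul_mul_assoc, mul_smul_comm, smul_smul, one_mul, mul_one,
      smul_sub]
    rw [mul_comm z (starRingEnd ℂ z)]
    abel
  haveI hBn : IsStarNormal B := ⟨hcomm⟩
  haveI hCn : IsStarNormal (Ring.inverse B) := by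
    constructor
    rw [← Ring.inverse_star]
    exact hcomm.ringInverse_ringInverse
  have hsp : spectralRadius ℂ (Ring.inverse B) = ‖Ring.inverse B‖₊ :=
    IsStarNormal.spectralRadius_eq_nnnorm _
  have hbound : spectralRadius ℂ (Ring.inverse B) ≤ ENNReal.ofReal (1 / d) := by
    rw [spectralRadius]
    refine iSup₂_le fun μ hμ => ?_
    have hCinv : Ring.inverse B = ↑hu.unit⁻¹ := by
      rw [← Ring.inverse_unit hu.unit, IsUnit.unit_spec]
    rw [hCinv] at hμ
    rw [← spectrum.map_inv] at hμ
    rw [Set.mem_inv] at hμ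
    rw [IsUnit.unit_spec] at hμ
    -- hμ : μ⁻¹ ∈ spectrum ℂ B
    have hμB : μ⁻¹ ∈ spectrum ℂ A - ({z} : Set ℂ) := by
      rwa [spectrum.sub_singleton_eq, ← halg, ← hB_def]
    obtain ⟨lam, hlam, w, hw, hlw⟩ := Set.mem_sub.mp hμB
    rw [Set.mem_singleton_iff] at hw
    subst hw
    have hdle : d ≤ ‖μ⁻¹‖ := by
      rw [← hlw]
      calc d ≤ dist lam w := hz lam hlam
      _ = ‖lam - w‖ := dist_eq_norm _ _
    have hnorm : ‖μ‖ ≤ 1 / d := by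
      rcases eq_or_ne μ 0 with rfl | hμ0
      · simp; positivity
      · rw [norm_inv] at hdle
        rw [one_div]
        rw [← inv_inv ‖μ‖]
        exact inv_anti₀ hdpos hdle
    calc (‖μ‖₊ : ℝ≥0∞) = ENNReal.ofReal ‖μ‖ := (ofReal_norm μ).symm
    _ ≤ ENNReal.ofReal (1 / d) := ENNReal.ofReal_le_ofReal hnorm
  rw [hsp] at hbound
  have hfinal : ENNReal.ofReal ‖Ring.inverse B‖ ≤ ENNReal.ofReal (1/d) := by
    rw [ofReal_norm]; exact hbound
  exact (ENNReal.ofReal_le_ofReal_iff (by positivity)).mp hfinal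



set_option maxHeartbeats 1000000 in
open intervalIntegral in
/-- Existence and uniqueness of the operator root `Z = A + T` of the basic equation
`Z = A − ∫₀¹ F(γ(t)) (Z − γ(t))⁻¹ γ'(t) dt`, provided `d := dist(σ(A), γ([0,1])) > 0` and
`V := ∫₀¹ ‖F(γ(t))‖ |γ'(t)| dt < d²/4`. The solution satisfies
`‖T‖ ≤ d/2 − √(d²/4 − V)` and is unique among solutions `T'` with `‖T'‖ ≤ d − √V`. -/
theorem operator_root_exists_unique {H : Type*}
    [NormedAddCommGroup H] [InnerProductSpace ℂ H] [CompleteSpace H]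
    (A : H →L[ℂ] H) (hA : IsSelfAdjoint A)
    (γ γ' : ℝ → ℂ)
    (hγ : ∀ t ∈ Set.Icc (0 : ℝ) 1, HasDerivAt γ (γ' t) t)
    (hγ' : ContinuousOn γ' (Set.Icc (0 : ℝ) 1))
    (F : ℂ → H →L[ℂ] H) (hF : ContinuousOn F (γ '' Set.Icc (0 : ℝ) 1))
    (d V : ℝ)
    (hd : d = sInf (Set.image2 dist (spectrum ℂ A) (γ '' Set.Icc (0 : ℝ) 1)))
    (hV : V = ∫ t in (0 : ℝ)..1, ‖F (γ t)‖ * ‖γ' t‖)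
    (hdpos : 0 < d) (hVd : V < d ^ 2 / 4) :
    ∃ T : H →L[ℂ] H,
      ‖T‖ ≤ d / 2 - Real.sqrt (d ^ 2 / 4 - V) ∧
      (∀ t ∈ Set.Icc (0 : ℝ) 1, IsUnit (A + T - γ t • (1 : H →L[ℂ] H))) ∧
      A + T =
        A - ∫ t in (0 : ℝ)..1,
          γ' t • (F (γ t) * Ring.inverse (A + T - γ t • (1 : H →L[ℂ] H))) ∧
      ∀ T' : H →L[ℂ] H, ‖T'‖ ≤ d - Real.sqrt V →
        (∀ t ∈ Set.Icc (0 : ℝ) 1, IsUnit (A + T' - γ t • (1 : H →L[ℂ] H))) →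
        A + T' =
          A - ∫ t in (0 : ℝ)..1,
            γ' t • (F (γ t) * Ring.inverse (A + T' - γ t • (1 : H →L[ℂ] H))) →
        T' = T := by
  classical
  have hV0 : 0 ≤ V := by
    rw [hV]
    apply intervalIntegral.integral_nonneg zero_le_one
    intro t _; positivity
  have hs0 : 0 ≤ Real.sqrt (d^2/4 - V) := Real.sqrt_nonneg _
  have hs_sq : (Real.sqrt (d^2/4 - V))^2 = d^2/4 - V := Real.sq_sqrt (by linarith)
  set s := Real.sqrt (d^2/4 - V) with hs_def
  have hs_le : s ≤ d/2 := by nlinarith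
  have hr0 : 0 ≤ d/2 - s := by linarith
  rcases subsingleton_or_nontrivial H with hH | hH
  · haveI : Subsingleton (H →L[ℂ] H) :=
      ⟨fun f g => ContinuousLinearMap.ext fun x => Subsingleton.elim _ _⟩
    exact ⟨0, by simpa using hr0, fun t _ => isUnit_of_subsingleton _, Subsingleton.elim _ _,
      fun T' _ _ _ => Subsingleton.elim _ _⟩
  have hps : 0 < d/2 + s := by linarith
  have hspec : ∀ t ∈ Set.Icc (0:ℝ) 1, ∀ lam ∈ spectrum ℂ A, d ≤ dist lam (γ t) := by
    intro t ht lam hlam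
    rw [hd]
    apply csInf_le
    · exact ⟨0, by rintro x ⟨a, -, b, -, rfl⟩; exact dist_nonneg⟩
    · exact Set.mem_image2_of_mem hlam ⟨t, ht, rfl⟩
  have hres : ∀ T : H →L[ℂ] H, ‖T‖ < d → ∀ t ∈ Set.Icc (0:ℝ) 1,
      IsUnit (A + T - γ t • (1 : H →L[ℂ] H)) ∧
        ‖Ring.inverse (A + T - γ t • (1 : H →L[ℂ] H))‖ ≤ 1 / (d - ‖T‖) := by
    intro T hT t ht
    obtain ⟨h1, h2⟩ := aux_resolvent A hA hdpos (hspec t ht)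
    have heq : A + T - γ t • (1 : H →L[ℂ] H) = (A - γ t • (1 : H →L[ℂ] H)) + T := by abel
    rw [heq]
    exact aux_pert hdpos h1 h2 hT
  have hγc : ContinuousOn γ (Set.Icc 0 1) := fun t ht => (hγ t ht).continuousAt.continuousWithinAt
  have hFc : ContinuousOn (fun t => F (γ t)) (Set.Icc (0:ℝ) 1) :=
    hF.comp hγc (Set.mapsTo_image γ _)
  have hRcont : ∀ T : H →L[ℂ] H, (∀ t ∈ Set.Icc (0:ℝ) 1, IsUnit (A + T - γ t • (1:H →L[ℂ] H))) →
      ContinuousOn (fun t => Ring.inverse (A + T - γ t • (1:H →L[ℂ] H))) (Set.Icc 0 1) := by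
    intro T hTu
    have hw : ContinuousOn (fun t => A + T - γ t • (1:H →L[ℂ] H)) (Set.Icc 0 1) :=
      continuousOn_const.sub (hγc.smul continuousOn_const)
    intro t ht
    have h1 := NormedRing.inverse_continuousAt (hTu t ht).unit
    rw [IsUnit.unit_spec] at h1
    exact ContinuousAt.comp_continuousWithinAt (g := Ring.inverse)
      (f := fun t => A + T - γ t • (1:H →L[ℂ] H)) (x := t) (s := Set.Icc 0 1) h1 (hw t ht)
  have hVint : IntervalIntegrable (fun t => ‖F (γ t)‖ * ‖γ' t‖) MeasureTheory.volume 0 1 := by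
    apply ContinuousOn.intervalIntegrable
    rw [Set.uIcc_of_le zero_le_one]
    exact hFc.norm.mul hγ'.norm
  have hkey : ∀ (f : ℝ → H →L[ℂ] H) (M : ℝ), 0 ≤ M → ContinuousOn f (Set.Icc 0 1) →
      (∀ t ∈ Set.Icc (0:ℝ) 1, ‖f t‖ ≤ M) →
      ‖∫ t in (0:ℝ)..1, γ' t • (F (γ t) * f t)‖ ≤ M * V := by
    intro f M hM hfc hfM
    have hb : ∀ᵐ t ∂(MeasureTheory.volume.restrict (Set.uIoc (0:ℝ) 1)),
        ‖γ' t • (F (γ t) * f t)‖ ≤ ‖F (γ t)‖ * ‖γ' t‖ * M := by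
      filter_upwards [MeasureTheory.ae_restrict_mem measurableSet_uIoc] with t ht
      have ht' : t ∈ Set.Icc (0:ℝ) 1 := by
        rw [Set.uIoc_of_le zero_le_one] at ht
        exact Set.Ioc_subset_Icc_self ht
      have h1 : ‖γ' t • (F (γ t) * f t)‖ = ‖γ' t‖ * ‖F (γ t) * f t‖ := norm_smul _ _
      have h2 : ‖F (γ t) * f t‖ ≤ ‖F (γ t)‖ * ‖f t‖ := norm_mul_le _ _
      have h3 := hfM t ht'
      rw [h1]
      calc ‖γ' t‖ * ‖F (γ t) * f t‖ ≤ ‖γ' t‖ * (‖F (γ t)‖ * M) := by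
            refine mul_le_mul_of_nonneg_left ?_ (norm_nonneg _)
            exact h2.trans (mul_le_mul_of_nonneg_left h3 (norm_nonneg _))
      _ = ‖F (γ t)‖ * ‖γ' t‖ * M := by ring
    have h4 := intervalIntegral.norm_integral_le_abs_of_norm_le hb (hVint.mul_const M)
    calc ‖∫ t in (0:ℝ)..1, γ' t • (F (γ t) * f t)‖
        ≤ |∫ t in (0:ℝ)..1, ‖F (γ t)‖ * ‖γ' t‖ * M| := h4
    _ = M * V := by
        rw [intervalIntegral.integral_mul_const, ← hV, abs_of_nonneg (by positivity), mul_comm]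
  have hInt : ∀ T : H →L[ℂ] H, (∀ t ∈ Set.Icc (0:ℝ) 1, IsUnit (A + T - γ t • (1:H →L[ℂ] H))) →
      IntervalIntegrable (fun t => γ' t • (F (γ t) * Ring.inverse (A + T - γ t • (1:H →L[ℂ] H))))
        MeasureTheory.volume 0 1 := by
    intro T h
    apply ContinuousOn.intervalIntegrable
    rw [Set.uIcc_of_le zero_le_one]
    exact hγ'.smul (hFc.mul (hRcont T h))
  set Φ : (H →L[ℂ] H) → (H →L[ℂ] H) := fun T =>
    -∫ t in (0:ℝ)..1, γ' t • (F (γ t) * Ring.inverse (A + T - γ t • (1:H →L[ℂ] H))) with hΦ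
  have hΦdiff : ∀ T1 T2 : H →L[ℂ] H, ∀ M1 M2 : ℝ, 0 ≤ M1 → 0 ≤ M2 →
      (∀ t ∈ Set.Icc (0:ℝ) 1, IsUnit (A + T1 - γ t • (1:H →L[ℂ] H))) →
      (∀ t ∈ Set.Icc (0:ℝ) 1, IsUnit (A + T2 - γ t • (1:H →L[ℂ] H))) →
      (∀ t ∈ Set.Icc (0:ℝ) 1, ‖Ring.inverse (A + T1 - γ t • (1:H →L[ℂ] H))‖ ≤ M1) →
      (∀ t ∈ Set.Icc (0:ℝ) 1, ‖Ring.inverse (A + T2 - γ t • (1:H →L[ℂ] H))‖ ≤ M2) →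
      ‖Φ T1 - Φ T2‖ ≤ M2 * (‖T1 - T2‖ * M1) * V := by
    intro T1 T2 M1 M2 hM1 hM2 h1 h2 hb1 hb2
    have heq : Φ T1 - Φ T2 = ∫ t in (0:ℝ)..1,
        γ' t • (F (γ t) * (Ring.inverse (A + T2 - γ t • (1:H →L[ℂ] H)) *
          ((T1 - T2) * Ring.inverse (A + T1 - γ t • (1:H →L[ℂ] H))))) := by
      simp only [hΦ]
      rw [neg_sub_neg, ← intervalIntegral.integral_sub (hInt T2 h2) (hInt T1 h1)]
      apply intervalIntegral.integral_congr
      intro t ht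
      rw [Set.uIcc_of_le zero_le_one] at ht
      have e1 := aux_inv_sub_inv (h2 t ht) (h1 t ht)
      have e2 : (A + T1 - γ t • (1:H →L[ℂ] H)) - (A + T2 - γ t • (1:H →L[ℂ] H)) = T1 - T2 := by
        abel
      show γ' t • (F (γ t) * Ring.inverse (A + T2 - γ t • (1:H →L[ℂ] H))) -
          γ' t • (F (γ t) * Ring.inverse (A + T1 - γ t • (1:H →L[ℂ] H))) =
          γ' t • (F (γ t) * (Ring.inverse (A + T2 - γ t • (1:H →L[ℂ] H)) *
            ((T1 - T2) * Ring.inverse (A + T1 - γ t • (1:H →L[ℂ] H)))))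
      rw [← smul_sub, ← mul_sub, e1, e2, mul_assoc]
    rw [heq]
    refine hkey _ _ (by positivity) ?_ ?_
    · exact (hRcont T2 h2).mul (continuousOn_const.mul (hRcont T1 h1))
    · intro t ht
      have n1 : ‖(T1 - T2) * Ring.inverse (A + T1 - γ t • (1:H →L[ℂ] H))‖ ≤ ‖T1 - T2‖ * M1 :=
        (norm_mul_le _ _).trans (mul_le_mul_of_nonneg_left (hb1 t ht) (norm_nonneg _))
      exact (norm_mul_le _ _).trans
        (mul_le_mul (hb2 t ht) n1 (norm_nonneg _) hM2)
  have hRb : ∀ T : H →L[ℂ] H, ‖T‖ ≤ d/2 - s →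
      (∀ t ∈ Set.Icc (0:ℝ) 1, IsUnit (A + T - γ t • (1:H →L[ℂ] H))) ∧
      (∀ t ∈ Set.Icc (0:ℝ) 1, ‖Ring.inverse (A + T - γ t • (1:H →L[ℂ] H))‖ ≤ 1/(d/2+s)) := by
    intro T hT
    have hTd : ‖T‖ < d := by nlinarith [norm_nonneg T]
    refine ⟨fun t ht => (hres T hTd t ht).1, fun t ht => (hres T hTd t ht).2.trans ?_⟩
    apply one_div_le_one_div_of_le hps
    linarith
  have hVfact : (1/(d/2+s)) * V = d/2 - s := by
    have hV' : V = (d/2 - s)*(d/2 + s) := by nlinarith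
    rw [hV']; field_simp
  have hmap : ∀ T : H →L[ℂ] H, ‖T‖ ≤ d/2 - s → ‖Φ T‖ ≤ d/2 - s := by
    intro T hT
    obtain ⟨h1, h2⟩ := hRb T hT
    have h3 := hkey _ _ (by positivity : (0:ℝ) ≤ 1/(d/2+s)) (hRcont T h1) h2
    calc ‖Φ T‖
        = ‖∫ t in (0:ℝ)..1, γ' t • (F (γ t) * Ring.inverse (A + T - γ t • (1:H →L[ℂ] H)))‖ := by
          simp only [hΦ]; exact norm_neg _
    _ ≤ (1/(d/2+s)) * V := h3
    _ = d/2 - s := hVfact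
  have hk1 : V / (d/2+s)^2 < 1 := by
    rw [div_lt_one (by positivity)]
    nlinarith
  set k : NNReal := Real.toNNReal (V / (d/2+s)^2) with hk
  have hkc : (k : ℝ) = V / (d/2+s)^2 := Real.coe_toNNReal _ (by positivity)
  haveI : CompleteSpace (Metric.closedBall (0:H →L[ℂ] H) (d/2 - s)) :=
    (Metric.isClosed_closedBall).completeSpace_coe
  haveI : Nonempty (Metric.closedBall (0:H →L[ℂ] H) (d/2 - s)) :=
    ⟨⟨0, Metric.mem_closedBall_self hr0⟩⟩
  have hmem : ∀ x : Metric.closedBall (0:H →L[ℂ] H) (d/2 - s), ‖(x : H →L[ℂ] H)‖ ≤ d/2 - s := by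
    intro x
    have hx := x.2
    rwa [Metric.mem_closedBall, dist_zero_right] at hx
  set f : Metric.closedBall (0:H →L[ℂ] H) (d/2 - s) → Metric.closedBall (0:H →L[ℂ] H) (d/2 - s) :=
    fun x => ⟨Φ x, by
      rw [Metric.mem_closedBall, dist_zero_right]
      exact hmap x (hmem x)⟩ with hf
  have hlip : ∀ x y : Metric.closedBall (0:H →L[ℂ] H) (d/2 - s),
      dist (f x) (f y) ≤ (k:ℝ) * dist x y := by
    intro x y
    obtain ⟨hx1, hx2⟩ := hRb ↑x (hmem x)
    obtain ⟨hy1, hy2⟩ := hRb ↑y (hmem y)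
    have h5 := hΦdiff ↑x ↑y (1/(d/2+s)) (1/(d/2+s)) (by positivity) (by positivity) hx1 hy1 hx2 hy2
    have h6 : (1/(d/2+s)) * (‖(↑x - ↑y : H →L[ℂ] H)‖ * (1/(d/2+s))) * V
        = (k:ℝ) * ‖(↑x - ↑y : H →L[ℂ] H)‖ := by rw [hkc]; field_simp
    have hd2 : dist (f x) (f y) = ‖Φ ↑x - Φ ↑y‖ := by rw [Subtype.dist_eq, dist_eq_norm]
    have hd3 : dist x y = ‖(↑x - ↑y : H →L[ℂ] H)‖ := by rw [Subtype.dist_eq, dist_eq_norm]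
    rw [hd2, hd3]
    exact h5.trans (le_of_eq h6)
  have hcontr : ContractingWith k f := by
    constructor
    · have hk1' : (k:ℝ) < 1 := by rw [hkc]; exact hk1
      exact_mod_cast hk1'
    · exact LipschitzWith.of_dist_le_mul hlip
  obtain ⟨T, hTnorm, hΦT⟩ : ∃ T : H →L[ℂ] H, ‖T‖ ≤ d/2 - s ∧ Φ T = T := by
    refine ⟨↑(ContractingWith.fixedPoint f hcontr), hmem _, ?_⟩
    exact congrArg Subtype.val (ContractingWith.fixedPoint_isFixedPt hcontr)
  obtain ⟨hTu, hTb⟩ := hRb T hTnorm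
  have h9 := hΦT
  simp only [hΦ] at h9
  refine ⟨T, hTnorm, hTu, ?_, ?_⟩
  · rw [sub_eq_add_neg]
    conv_lhs => rw [← h9]
  · intro T' hT'norm hT'u hT'eq
    have hT'fix : Φ T' = T' := by
      rw [sub_eq_add_neg] at hT'eq
      simp only [hΦ]
      exact (add_left_cancel hT'eq).symm
    by_cases hVz : V = 0
    · have hs_eq : s = d/2 := by
        rw [hs_def, hVz, sub_zero, show d^2/4 = (d/2)^2 by ring, Real.sqrt_sq (by linarith)]
      have hT0 : T = 0 := by
        rw [hs_eq] at hTnorm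
        simp only [sub_self] at hTnorm
        exact norm_le_zero_iff.mp hTnorm
      obtain ⟨M, hM⟩ := isCompact_Icc.exists_bound_of_continuousOn (hRcont T' hT'u)
      have hb' : ∀ t ∈ Set.Icc (0:ℝ) 1,
          ‖Ring.inverse (A + T' - γ t • (1:H →L[ℂ] H))‖ ≤ max M 0 :=
        fun t ht => (hM t ht).trans (le_max_left _ _)
      have h6 := hkey _ (max M 0) (le_max_right _ _) (hRcont T' hT'u) hb'
      rw [hVz, mul_zero] at h6
      have hT'0 : T' = 0 := by
        have h7 : ‖T'‖ ≤ 0 := by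
          rw [← hT'fix]
          simp only [hΦ]
          rw [norm_neg]
          exact h6
        exact norm_le_zero_iff.mp h7
      rw [hT'0, hT0]
    · have hVpos : 0 < V := lt_of_le_of_ne hV0 (Ne.symm hVz)
      have hsVpos : 0 < Real.sqrt V := Real.sqrt_pos.mpr hVpos
      have hsV : Real.sqrt V < d/2 + s := by
        have h1 : Real.sqrt V < Real.sqrt (d^2/4) := Real.sqrt_lt_sqrt hV0 (by linarith)
        have h2 : Real.sqrt (d^2/4) = d/2 := by
          rw [show d^2/4 = (d/2)^2 by ring, Real.sqrt_sq (by linarith)]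
        linarith
      have hT'd : ‖T'‖ < d := by linarith
      have hT'b : ∀ t ∈ Set.Icc (0:ℝ) 1,
          ‖Ring.inverse (A + T' - γ t • (1:H →L[ℂ] H))‖ ≤ 1/Real.sqrt V := by
        intro t ht
        refine (hres T' hT'd t ht).2.trans ?_
        apply one_div_le_one_div_of_le hsVpos
        linarith
      have hest := hΦdiff T' T (1/Real.sqrt V) (1/(d/2+s)) (by positivity) (by positivity)
        hT'u hTu hT'b hTb
      rw [hT'fix, hΦT] at hest
      have hest2 : ‖T' - T‖ ≤ ((1/(d/2+s)) * (1/Real.sqrt V) * V) * ‖T' - T‖ := by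
        calc ‖T' - T‖ ≤ (1/(d/2+s)) * (‖T' - T‖ * (1/Real.sqrt V)) * V := hest
        _ = ((1/(d/2+s)) * (1/Real.sqrt V) * V) * ‖T' - T‖ := by ring
      have hc1 : (1/(d/2+s)) * (1/Real.sqrt V) * V < 1 := by
        have he : (1/(d/2+s)) * (1/Real.sqrt V) * V = V / ((d/2+s) * Real.sqrt V) := by
          field_simp
        rw [he, div_lt_one (by positivity)]
        nlinarith [Real.mul_self_sqrt hV0]
      have h8 : ‖T' - T‖ ≤ 0 := by nlinarith [norm_nonneg (T' - T)]
      exact sub_eq_zero.mp (norm_le_zero_iff.mp h8)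
end

section
/- Let Z := A + T, where T is the unique solution with ‖T‖ ≤ d/2 − √(d²/4 − V) of the equation Z = A − ∫₀¹ F(γ(t)) (Z − γ(t))^{-1} γ'(t) dt, and for z ∈ ℂ \ γ([0,1]) let W(z) := I − ∫₀¹ F(γ(t)) (γ(t) − z)^{-1} (Z − γ(t))^{-1} γ'(t) dt. If z satisfies dist(z, σ(A)) ≤ d/2 (and z ∉ γ([0,1])), then W(z) is boundedly invertible and ‖W(z)^{-1}‖ ≤ (1 − V/(d²/4))^{-1}. -/
open scoped ENNReal NNReal

lemma star_normal_inv_aux {R : Type*} [NormedRing R] [StarRing R] (U : Rˣ)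
    (h : star (U : R) * U = U * star (U : R)) : IsStarNormal ((U⁻¹ : Rˣ) : R) := by
  have hc : Commute (star U) U := Units.ext (by simpa using h)
  have h3 := congrArg Units.val hc.inv_inv
  have h4 : star ((U⁻¹ : Rˣ) : R) * ((U⁻¹ : Rˣ) : R)
      = ((U⁻¹ : Rˣ) : R) * star ((U⁻¹ : Rˣ) : R) := by
    simpa [← star_inv₀, Units.coe_star] using h3
  exact ⟨h4⟩

lemma resolvent_norm_le {R : Type*} [CStarAlgebra R] (a : R) (ha : IsSelfAdjoint a)
    (w : ℂ) (d : ℝ) (hd : 0 < d) (hw : ∀ μ ∈ spectrum ℂ a, d ≤ ‖μ - w‖) :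
    ∃ U : Rˣ, (U : R) = a - w • 1 ∧ ‖((U⁻¹ : Rˣ) : R)‖ ≤ d⁻¹ := by
  have halg : (w • (1 : R)) = algebraMap ℂ R w := (Algebra.algebraMap_eq_smul_one w).symm
  have hw' : w ∉ spectrum ℂ a := by
    intro hmem
    have := hw w hmem
    simp at this
    linarith
  have hU1 : IsUnit (algebraMap ℂ R w - a) := spectrum.notMem_iff.mp hw'
  have hU : IsUnit (a - w • 1) := by
    rw [halg, ← neg_sub]
    exact hU1.neg
  obtain ⟨U, hUval⟩ := hU
  have hnormal : star (a - w • 1) * (a - w • 1) = (a - w • 1) * star (a - w • 1) := by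
    have hstar : star (a - w • 1) = a - (starRingEnd ℂ w) • 1 := by
      rw [star_sub, ha.star_eq, star_smul, star_one]
      rfl
    rw [hstar]
    simp only [sub_mul, mul_sub, smul_mul_assoc, mul_smul_comm, one_mul, mul_one, smul_smul,
      smul_sub]
    rw [mul_comm w (starRingEnd ℂ w)]
    abel
  haveI : IsStarNormal ((U⁻¹ : Rˣ) : R) := star_normal_inv_aux U (by rw [hUval]; exact hnormal)
  have hsr : spectralRadius ℂ ((U⁻¹ : Rˣ) : R) ≤ ((Real.toNNReal d⁻¹ : ℝ≥0) : ℝ≥0∞) := by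
    apply iSup₂_le
    intro k hk
    rw [← spectrum.map_inv U, Set.mem_inv, hUval] at hk
    rw [halg, ← spectrum.sub_singleton_eq] at hk
    obtain ⟨μ, hμ, w', hw'', hμw⟩ := Set.mem_sub.mp hk
    rw [Set.mem_singleton_iff] at hw''
    subst hw''
    have hdk : d ≤ ‖k⁻¹‖ := hμw ▸ hw μ hμ
    have : ‖k‖ ≤ d⁻¹ := by
      rw [← inv_inv k, norm_inv]
      exact inv_anti₀ hd hdk
    rw [ENNReal.coe_le_coe]
    exact (Real.le_toNNReal_iff_coe_le (by positivity)).mpr this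
  refine ⟨U, hUval, ?_⟩
  rw [IsStarNormal.spectralRadius_eq_nnnorm] at hsr
  rw [ENNReal.coe_le_coe] at hsr
  have := (Real.le_toNNReal_iff_coe_le (by positivity)).mp hsr
  simpa using this

lemma norm_oneSub_inv_le {R : Type*} [NormedRing R] [NormOneClass R] [CompleteSpace R]
    {t : R} (h : ‖t‖ < 1) :
    ‖(((Units.oneSub t h)⁻¹ : Rˣ) : R)‖ ≤ (1 - ‖t‖)⁻¹ := by
  have hval : (((Units.oneSub t h)⁻¹ : Rˣ) : R) = ∑' n : ℕ, t ^ n := rfl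
  rw [hval]
  exact tsum_of_norm_bounded (hasSum_geometric_of_lt_one (norm_nonneg t) h)
    (fun i => norm_pow_le t i)

lemma perturbed_inv {R : Type*} [NormedRing R] [NormOneClass R] [CompleteSpace R]
    (U : Rˣ) (T : R) (d : ℝ) (hd : 0 < d) (hUinv : ‖((U⁻¹ : Rˣ) : R)‖ ≤ d⁻¹)
    (hT : ‖T‖ ≤ d / 2) :
    ∃ W : Rˣ, (W : R) = (U : R) + T ∧ ‖((W⁻¹ : Rˣ) : R)‖ ≤ 2 / d := by
  have hs : ‖-(((U⁻¹ : Rˣ) : R) * T)‖ ≤ 1 / 2 := by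
    rw [norm_neg]
    calc ‖((U⁻¹ : Rˣ) : R) * T‖ ≤ ‖((U⁻¹ : Rˣ) : R)‖ * ‖T‖ := norm_mul_le _ _
      _ ≤ d⁻¹ * (d / 2) := mul_le_mul hUinv hT (norm_nonneg T) (by positivity)
      _ = 1 / 2 := by field_simp
  have hs1 : ‖-(((U⁻¹ : Rˣ) : R) * T)‖ < 1 := lt_of_le_of_lt hs (by norm_num)
  refine ⟨U * Units.oneSub _ hs1, ?_, ?_⟩
  · rw [Units.val_mul, Units.val_oneSub, sub_neg_eq_add, mul_add, mul_one,
      ← mul_assoc, Units.mul_inv, one_mul]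
  · rw [mul_inv_rev, Units.val_mul]
    have hinv2 : ‖(((Units.oneSub _ hs1)⁻¹ : Rˣ) : R)‖ ≤ 2 := by
      refine le_trans (norm_oneSub_inv_le hs1) ?_
      have h2 : (1:ℝ)/2 ≤ 1 - ‖-(((U⁻¹ : Rˣ) : R) * T)‖ := by linarith
      calc (1 - ‖-(((U⁻¹ : Rˣ) : R) * T)‖)⁻¹ ≤ ((1:ℝ)/2)⁻¹ := inv_anti₀ (by norm_num) h2
        _ = 2 := by norm_num
    calc ‖(((Units.oneSub _ hs1)⁻¹ : Rˣ) : R) * ((U⁻¹ : Rˣ) : R)‖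
        ≤ ‖(((Units.oneSub _ hs1)⁻¹ : Rˣ) : R)‖ * ‖((U⁻¹ : Rˣ) : R)‖ := norm_mul_le _ _
      _ ≤ 2 * d⁻¹ := mul_le_mul hinv2 hUinv (norm_nonneg _) (by norm_num)
      _ = 2 / d := by rw [div_eq_mul_inv]

/-- Bounded invertibility of the factor `W(z)`: under the hypotheses of the factorization
theorem, if `z ∉ γ([0,1])` and `dist(z, σ(A)) ≤ d/2`, then
`W(z) = I − ∫₀¹ F(γ(t)) (γ(t) − z)⁻¹ (Z − γ(t))⁻¹ γ'(t) dt` is boundedly invertible and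
`‖W(z)⁻¹‖ ≤ (1 − V/(d²/4))⁻¹`. -/
theorem continued_schur_factor_invertible {H : Type*}
    [NormedAddCommGroup H] [InnerProductSpace ℂ H] [CompleteSpace H]
    (A : H →L[ℂ] H) (hA : IsSelfAdjoint A)
    (γ γ' : ℝ → ℂ)
    (hγ : ∀ t ∈ Set.Icc (0 : ℝ) 1, HasDerivAt γ (γ' t) t)
    (hγ' : ContinuousOn γ' (Set.Icc (0 : ℝ) 1))
    (F : ℂ → H →L[ℂ] H) (hF : ContinuousOn F (γ '' Set.Icc (0 : ℝ) 1))
    (d V : ℝ)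
    (hd : d = sInf (Set.image2 dist (spectrum ℂ A) (γ '' Set.Icc (0 : ℝ) 1)))
    (hV : V = ∫ t in (0 : ℝ)..1, ‖F (γ t)‖ * ‖γ' t‖)
    (hdpos : 0 < d) (hVd : V < d ^ 2 / 4)
    (T : H →L[ℂ] H)
    (hT : ‖T‖ ≤ d / 2 - Real.sqrt (d ^ 2 / 4 - V))
    (hTinv : ∀ t ∈ Set.Icc (0 : ℝ) 1, IsUnit (A + T - γ t • (1 : H →L[ℂ] H)))
    (hTeq : A + T =
      A - ∫ t in (0 : ℝ)..1,
        γ' t • (F (γ t) * Ring.inverse (A + T - γ t • (1 : H →L[ℂ] H))))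
    (z : ℂ) (hz : z ∉ γ '' Set.Icc (0 : ℝ) 1)
    (hzA : Metric.infDist z (spectrum ℂ A) ≤ d / 2) :
    IsUnit ((1 : H →L[ℂ] H) - ∫ t in (0 : ℝ)..1,
        (γ' t / (γ t - z)) •
          (F (γ t) * Ring.inverse (A + T - γ t • (1 : H →L[ℂ] H)))) ∧
      ‖Ring.inverse ((1 : H →L[ℂ] H) - ∫ t in (0 : ℝ)..1,
          (γ' t / (γ t - z)) •
            (F (γ t) * Ring.inverse (A + T - γ t • (1 : H →L[ℂ] H))))‖ ≤
        (1 - V / (d ^ 2 / 4))⁻¹ := by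
  -- spectrum nonempty
  have hspec : (spectrum ℂ A).Nonempty := by
    by_contra hemp
    rw [Set.not_nonempty_iff_eq_empty] at hemp
    rw [hemp, Set.image2_empty_left, Real.sInf_empty] at hd
    exact absurd hd (by linarith)
  haveI : Nontrivial H := by
    by_contra hcon
    haveI := not_nontrivial_iff_subsingleton.mp hcon
    haveI : Subsingleton (H →L[ℂ] H) := inferInstance
    exact absurd (spectrum.of_subsingleton (R := ℂ) A) (by
      intro h; exact hspec.ne_empty h)
  -- V nonneg
  have hVnonneg : 0 ≤ V := by
    rw [hV]
    apply intervalIntegral.integral_nonneg zero_le_one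
    intro t _; positivity
  have hsqrt : 0 < Real.sqrt (d ^ 2 / 4 - V) := Real.sqrt_pos.mpr (by linarith)
  have hThalf : ‖T‖ ≤ d / 2 := by linarith
  -- distance from spectrum to curve
  have hdistc : ∀ w ∈ γ '' Set.Icc (0 : ℝ) 1, ∀ μ ∈ spectrum ℂ A, d ≤ ‖μ - w‖ := by
    intro w hw μ hμ
    have hmem : dist μ w ∈ Set.image2 dist (spectrum ℂ A) (γ '' Set.Icc (0 : ℝ) 1) :=
      Set.mem_image2_of_mem hμ hw
    have hbdd : BddBelow (Set.image2 dist (spectrum ℂ A) (γ '' Set.Icc (0 : ℝ) 1)) := by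
      refine ⟨0, ?_⟩
      rintro x ⟨μ', _, w', _, rfl⟩
      exact dist_nonneg
    have := csInf_le hbdd hmem
    rw [← hd] at this
    rwa [dist_eq_norm] at this
  -- inverse bounds
  have hinvb : ∀ t ∈ Set.Icc (0 : ℝ) 1,
      ‖Ring.inverse (A + T - γ t • (1 : H →L[ℂ] H))‖ ≤ 2 / d := by
    intro t ht
    obtain ⟨U, hUval, hUinv⟩ := resolvent_norm_le A hA (γ t) d hdpos
      (hdistc _ (Set.mem_image_of_mem γ ht))
    obtain ⟨W, hWval, hWinv⟩ := perturbed_inv U T d hdpos hUinv hThalf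
    have hWval' : (W : H →L[ℂ] H) = A + T - γ t • (1 : H →L[ℂ] H) := by
      rw [hWval, hUval]; abel
    rw [← hWval', Ring.inverse_unit]
    exact hWinv
  -- lower bound on |γ t - z|
  obtain ⟨lam, hlam, hlameq⟩ :=
    (spectrum.isCompact (𝕜 := ℂ) A).exists_infDist_eq_dist hspec z
  have hzlam : dist z lam ≤ d / 2 := by rw [← hlameq]; exact hzA
  have hlow : ∀ t ∈ Set.Icc (0 : ℝ) 1, d / 2 ≤ ‖γ t - z‖ := by
    intro t ht
    have h1 : d ≤ ‖lam - γ t‖ := hdistc _ (Set.mem_image_of_mem γ ht) lam hlam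
    have h2 : dist lam (γ t) ≤ dist lam z + dist z (γ t) := dist_triangle _ _ _
    rw [dist_eq_norm] at h2
    have h3 : dist z (γ t) = ‖γ t - z‖ := by rw [dist_comm, dist_eq_norm]
    have h4 : dist lam z = dist z lam := dist_comm _ _
    rw [h3, h4] at h2
    linarith [h1.trans h2]
  -- continuity of γ
  have hγcont : ContinuousOn γ (Set.Icc (0 : ℝ) 1) := fun t ht =>
    (hγ t ht).continuousAt.continuousWithinAt
  -- the integrand
  set g : ℝ → (H →L[ℂ] H) := fun t =>
    (γ' t / (γ t - z)) • (F (γ t) * Ring.inverse (A + T - γ t • (1 : H →L[ℂ] H))) with hg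
  have hgcont : ContinuousOn g (Set.Icc (0 : ℝ) 1) := by
    have hFγ : ContinuousOn (fun t => F (γ t)) (Set.Icc (0 : ℝ) 1) :=
      hF.comp hγcont (Set.mapsTo_image γ _)
    have hm : ContinuousOn (fun t => A + T - γ t • (1 : H →L[ℂ] H)) (Set.Icc (0 : ℝ) 1) :=
      continuousOn_const.sub (hγcont.smul continuousOn_const)
    have hinvcont : ContinuousOn (fun t => Ring.inverse (A + T - γ t • (1 : H →L[ℂ] H)))
        (Set.Icc (0 : ℝ) 1) := by
      intro t ht
      have hu := hTinv t ht
      have hca : ContinuousAt Ring.inverse (A + T - γ t • (1 : H →L[ℂ] H)) := by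
        have := NormedRing.inverse_continuousAt hu.unit
        rwa [hu.unit_spec] at this
      have goal : ContinuousWithinAt
          (Ring.inverse ∘ (fun t => A + T - γ t • (1 : H →L[ℂ] H))) (Set.Icc 0 1) t :=
        ContinuousWithinAt.comp hca.continuousWithinAt (hm t ht) (Set.mapsTo_univ _ _)
      exact goal
    have hden : ContinuousOn (fun t => γ t - z) (Set.Icc (0 : ℝ) 1) :=
      hγcont.sub continuousOn_const
    have hcoef : ContinuousOn (fun t => γ' t / (γ t - z)) (Set.Icc (0 : ℝ) 1) := by
      apply hγ'.div hden
      intro t ht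
      have := hlow t ht
      intro h0
      rw [h0] at this
      simp at this
      linarith
    exact hcoef.smul (hFγ.mul hinvcont)
  have hgint : IntervalIntegrable g MeasureTheory.volume 0 1 := by
    apply ContinuousOn.intervalIntegrable
    rwa [Set.uIcc_of_le zero_le_one]
  -- bound function
  set b : ℝ → ℝ := fun t => 4 / d ^ 2 * (‖F (γ t)‖ * ‖γ' t‖) with hb
  have hbcont : ContinuousOn b (Set.Icc (0 : ℝ) 1) := by
    apply ContinuousOn.mul continuousOn_const
    exact ((hF.comp hγcont (Set.mapsTo_image γ _)).norm.mul hγ'.norm)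
  have hbint : IntervalIntegrable b MeasureTheory.volume 0 1 := by
    apply ContinuousOn.intervalIntegrable
    rwa [Set.uIcc_of_le zero_le_one]
  -- pointwise bound
  have hptb : ∀ t ∈ Set.Icc (0 : ℝ) 1, ‖g t‖ ≤ b t := by
    intro t ht
    have hlowt := hlow t ht
    have hdenpos : (0:ℝ) < ‖γ t - z‖ := lt_of_lt_of_le (by positivity) hlowt
    have h1 : ‖γ' t / (γ t - z)‖ ≤ ‖γ' t‖ * (2 / d) := by
      rw [norm_div]
      calc ‖γ' t‖ / ‖γ t - z‖ ≤ ‖γ' t‖ / (d / 2) :=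
            div_le_div_of_nonneg_left (norm_nonneg _) (by positivity) hlowt
        _ = ‖γ' t‖ * (2 / d) := by field_simp; try ring
    have h2 : ‖F (γ t) * Ring.inverse (A + T - γ t • (1 : H →L[ℂ] H))‖ ≤ ‖F (γ t)‖ * (2 / d) := by
      calc ‖F (γ t) * Ring.inverse (A + T - γ t • (1 : H →L[ℂ] H))‖
          ≤ ‖F (γ t)‖ * ‖Ring.inverse (A + T - γ t • (1 : H →L[ℂ] H))‖ := norm_mul_le _ _
        _ ≤ ‖F (γ t)‖ * (2 / d) := by
            apply mul_le_mul_of_nonneg_left (hinvb t ht) (norm_nonneg _)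
    calc ‖g t‖ = ‖γ' t / (γ t - z)‖ * ‖F (γ t) * Ring.inverse (A + T - γ t • (1 : H →L[ℂ] H))‖ :=
          norm_smul _ _
      _ ≤ (‖γ' t‖ * (2 / d)) * (‖F (γ t)‖ * (2 / d)) := by
          apply mul_le_mul h1 h2 (norm_nonneg _) (by positivity)
      _ = b t := by rw [hb]; field_simp; try ring
  -- integral bound
  set S : H →L[ℂ] H := ∫ t in (0:ℝ)..1, g t with hS
  have hpt' : ∀ t ∈ Set.Icc (0:ℝ) 1, ‖g t‖ ≤ b t := hptb
  have hSb : ‖S‖ ≤ 4 / d ^ 2 * V := by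
    have h1 : ‖S‖ ≤ ∫ t in (0:ℝ)..1, ‖g t‖ :=
      intervalIntegral.norm_integral_le_integral_norm zero_le_one
    have h2 : (∫ t in (0:ℝ)..1, ‖g t‖) ≤ ∫ t in (0:ℝ)..1, b t :=
      intervalIntegral.integral_mono_on zero_le_one hgint.norm hbint hpt'
    have h3 : (∫ t in (0:ℝ)..1, b t) = 4 / d ^ 2 * V := by
      rw [hb, intervalIntegral.integral_const_mul, ← hV]
    linarith
  have hkey : 4 / d ^ 2 * V = V / (d ^ 2 / 4) := by
    field_simp
  have hr1 : V / (d ^ 2 / 4) < 1 := (div_lt_one (by positivity)).mpr hVd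
  have hSlt : ‖S‖ < 1 := by
    rw [hkey] at hSb
    linarith
  have hSr : ‖S‖ ≤ V / (d ^ 2 / 4) := hkey ▸ hSb
  constructor
  · exact isUnit_one_sub_of_norm_lt_one hSlt
  · rw [NormedRing.inverse_one_sub S hSlt]
    refine le_trans (norm_oneSub_inv_le hSlt) ?_
    apply inv_anti₀ (by linarith)
    linarith
end
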